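/- arXiv:0910.5855 — 8 statements merged into one kernel-verified Lean document; each statement's English description precedes it below -/
import Mathlib

section
/- For real parameters β > 0, γ > 0, δ > 0, a real number ω, and every s > |ω|^{1/β}, the Laplace transform of t ↦ t^{γ-1} E_{β,γ}^{δ}(ω t^{β}) is given by ∫₀^∞ e^{-st} t^{γ-1} E_{β,γ}^{δ}(ω t^{β}) dt = s^{βδ-γ} / (s^{β} - ω)^{δ}. -/
open Real MeasureTheory

open Set Filter

lemma poch_pos {δ : ℝ} (hδ : 0 < δ) (r : ℕ) :
    0 < ∏ i ∈ Finset.range r, (δ + i) :=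
  Finset.prod_pos fun i _ => by positivity

lemma summable_poch {δ : ℝ} (hδ : 0 < δ) {x : ℝ} (hx : |x| < 1) :
    Summable (fun r : ℕ => (∏ i ∈ Finset.range r, (δ + i)) * x ^ r / r.factorial) := by
  have hx0 : (0:ℝ) ≤ |x| := abs_nonneg x
  set l : ℝ := (1 + |x|) / 2 with hl
  have hxl : |x| < l := by rw [hl]; linarith
  have hl1 : l < 1 := by rw [hl]; linarith
  have hl0 : 0 < l := by rw [hl]; linarith
  apply summable_of_ratio_norm_eventually_le hl1
  filter_upwards [eventually_ge_atTop ⌈δ * |x| / (l - |x|)⌉₊] with n hn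
  have hn' : δ * |x| / (l - |x|) ≤ (n : ℝ) := by
    exact_mod_cast (Nat.ceil_le.mp hn)
  have hn'' : δ * |x| ≤ (n : ℝ) * (l - |x|) := by
    rw [div_le_iff₀ (by linarith)] at hn'
    linarith [hn']
  have key : (δ + n) * |x| ≤ l * (n + 1) := by nlinarith [Nat.cast_nonneg (α := ℝ) n]
  have hfe : (∏ i ∈ Finset.range (n+1), (δ + i)) * x ^ (n+1) / (n+1).factorial
      = ((δ + n) * x / (n + 1)) *
        ((∏ i ∈ Finset.range n, (δ + i)) * x ^ n / n.factorial) := by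
    rw [Finset.prod_range_succ, pow_succ, Nat.factorial_succ]
    push_cast
    field_simp
  rw [hfe]
  rw [norm_mul, Real.norm_eq_abs, abs_div, abs_mul]
  have h1 : |δ + (n:ℝ)| = δ + n := abs_of_pos (by positivity)
  have h2 : |(n:ℝ) + 1| = (n:ℝ) + 1 := abs_of_pos (by positivity)
  rw [h1, h2]
  have : (δ + ↑n) * |x| / (↑n + 1) ≤ l := by
    rw [div_le_iff₀ (by positivity)]
    linarith [key]
  exact mul_le_mul_of_nonneg_right this (norm_nonneg _)

lemma Gamma_poch {δ : ℝ} (hδ : 0 < δ) (r : ℕ) :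
    Real.Gamma (δ + r) = (∏ i ∈ Finset.range r, (δ + i)) * Real.Gamma δ := by
  induction r with
  | zero => simp
  | succ n ih =>
    have h : δ + (n+1 : ℕ) = (δ + n) + 1 := by push_cast; ring
    rw [h, Real.Gamma_add_one (by positivity), ih, Finset.prod_range_succ]
    ring

lemma integrableOn_gamma_kernel {a b : ℝ} (ha : 0 < a) (hb : 0 < b) :
    IntegrableOn (fun t : ℝ => t ^ (a - 1) * Real.exp (-(b * t))) (Ioi 0) := by
  have h := integrableOn_rpow_mul_exp_neg_mul_rpow (p := 1) (s := a - 1) (b := b)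
    (by linarith) one_pos hb
  refine h.congr_fun (fun t ht => ?_) measurableSet_Ioi
  beta_reduce
  rw [Real.rpow_one, neg_mul]

lemma hasSum_binomial {δ : ℝ} (hδ : 0 < δ) {x : ℝ} (hx : |x| < 1) :
    HasSum (fun r : ℕ => (∏ i ∈ Finset.range r, (δ + i)) * x ^ r / r.factorial)
      ((1 - x) ^ (-δ)) := by
  have hsum := summable_poch hδ hx
  have hax : |(|x|)| < 1 := by rwa [abs_abs]
  have hsum' := summable_poch hδ hax
  have hx1 : x < 1 := lt_of_le_of_lt (le_abs_self x) hx
  have h1x : 0 < 1 - x := by linarith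
  have hΓ : 0 < Real.Gamma δ := Real.Gamma_pos_of_pos hδ
  rw [hsum.hasSum_iff]
  set F : ℕ → ℝ → ℝ := fun r t => x ^ r / r.factorial * (t ^ (δ + r - 1) * Real.exp (-(1 * t)))
    with hF
  have hFint : ∀ r : ℕ, Integrable (F r) (volume.restrict (Ioi 0)) := fun r =>
    (integrableOn_gamma_kernel (a := δ + r) (by positivity) one_pos).const_mul _
  have hnormval : ∀ r : ℕ, (∫ t in Ioi 0, ‖F r t‖) =
      ((∏ i ∈ Finset.range r, (δ + i)) * |x| ^ r / r.factorial) * Real.Gamma δ := by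
    intro r
    have : ∀ t ∈ Ioi (0:ℝ), ‖F r t‖ =
        |x| ^ r / r.factorial * (t ^ (δ + r - 1) * Real.exp (-(1 * t))) := by
      intro t ht
      rw [hF]
      rw [norm_mul, Real.norm_eq_abs, Real.norm_eq_abs, abs_div, abs_pow,
        Nat.abs_cast, abs_of_nonneg (mul_nonneg (Real.rpow_nonneg (le_of_lt ht) _) (Real.exp_pos _).le)]
    rw [setIntegral_congr_fun measurableSet_Ioi this, integral_const_mul,
      integral_rpow_mul_exp_neg_mul_Ioi (by positivity) one_pos,
      Gamma_poch hδ r]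
    norm_num
    ring
  have hnormsum : Summable fun r : ℕ => ∫ t in Ioi 0, ‖F r t‖ := by
    refine (hsum'.mul_right (Real.Gamma δ)).congr fun r => ?_
    rw [hnormval r]
  have swap := MeasureTheory.integral_tsum_of_summable_integral_norm hFint hnormsum
  -- compute the inner sum
  have hinner : ∀ t ∈ Ioi (0:ℝ), (∑' r : ℕ, F r t)
      = t ^ (δ - 1) * Real.exp (-((1 - x) * t)) := by
    intro t ht
    have ht' : (0:ℝ) < t := ht
    have hpt : ∀ r : ℕ, F r t
        = (t ^ (δ - 1) * Real.exp (-(1 * t))) * ((x * t) ^ r / r.factorial) := by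
      intro r
      simp only [hF]
      have : t ^ (δ + r - 1) = t ^ (δ - 1) * t ^ r := by
        rw [show δ + r - 1 = (δ - 1) + (r:ℝ) by ring, Real.rpow_add ht',
          Real.rpow_natCast]
      rw [this, mul_pow]
      ring
    rw [tsum_congr hpt, tsum_mul_left]
    have hexp : (∑' r : ℕ, (x * t) ^ r / r.factorial) = Real.exp (x * t) := by
      rw [Real.exp_eq_exp_ℝ]
      exact (NormedSpace.expSeries_div_hasSum_exp (x * t)).tsum_eq
    rw [hexp, mul_assoc, ← Real.exp_add]
    ring_nf
  have hval : (∫ t in Ioi 0, ∑' r : ℕ, F r t) = (1 / (1 - x)) ^ δ * Real.Gamma δ := by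
    rw [setIntegral_congr_fun measurableSet_Ioi hinner]
    exact integral_rpow_mul_exp_neg_mul_Ioi hδ h1x
  have hterm : ∀ r : ℕ, (∫ t in Ioi 0, F r t)
      = ((∏ i ∈ Finset.range r, (δ + i)) * x ^ r / r.factorial) * Real.Gamma δ := by
    intro r
    rw [hF]
    simp only
    rw [integral_const_mul, integral_rpow_mul_exp_neg_mul_Ioi (by positivity) one_pos,
      Gamma_poch hδ r]
    norm_num
    ring
  have : (∑' r : ℕ, ((∏ i ∈ Finset.range r, (δ + i)) * x ^ r / r.factorial) * Real.Gamma δ)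
      = (1 / (1 - x)) ^ δ * Real.Gamma δ := by
    rw [← tsum_congr hterm, swap, hval]
  rw [tsum_mul_right] at this
  have hfin : (∑' r : ℕ, (∏ i ∈ Finset.range r, (δ + i)) * x ^ r / r.factorial)
      = (1 / (1 - x)) ^ δ := by
    exact mul_right_cancel₀ (ne_of_gt hΓ) this
  rw [hfin, one_div, Real.inv_rpow h1x.le, ← Real.rpow_neg h1x.le]

/-- The generalized Mittag-Leffler function
`E_{α,β}^γ(x) = Σ_{r=0}^∞ (γ)_r x^r / (r! Γ(αr+β))`,
where `(γ)_r = γ(γ+1)⋯(γ+r-1)` is the Pochhammer symbol. -/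
noncomputable def gml (α β γ x : ℝ) : ℝ :=
  ∑' r : ℕ, (∏ i ∈ Finset.range r, (γ + i)) * x ^ r /
    (r.factorial * Real.Gamma (α * r + β))

/-- Laplace transform of `t ↦ t^{γ-1} E_{β,γ}^δ(ω t^β)`:
for `s > |ω|^{1/β}` it equals `s^{βδ-γ} / (s^β - ω)^δ`. -/
theorem laplace_gml (β γ δ ω : ℝ) (hβ : 0 < β) (hγ : 0 < γ) (hδ : 0 < δ)
    (s : ℝ) (hs : |ω| ^ (1 / β) < s) :
    ∫ t in Set.Ioi (0 : ℝ),
        Real.exp (-(s * t)) * t ^ (γ - 1) * gml β γ δ (ω * t ^ β)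
      = s ^ (β * δ - γ) / (s ^ β - ω) ^ δ := by
  have hs0 : 0 < s := lt_of_le_of_lt (Real.rpow_nonneg (abs_nonneg ω) _) hs
  have hsβ : 0 < s ^ β := Real.rpow_pos_of_pos hs0 β
  have hω : |ω| < s ^ β := by
    calc |ω| = (|ω| ^ (1/β)) ^ β := by
          rw [← Real.rpow_mul (abs_nonneg ω), one_div_mul_cancel hβ.ne', Real.rpow_one]
      _ < s ^ β := Real.rpow_lt_rpow (Real.rpow_nonneg (abs_nonneg ω) _) hs hβ
  have hsub : 0 < s ^ β - ω := by
    have := le_abs_self ω; linarith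
  set x : ℝ := ω / s ^ β with hxdef
  have hxlt : |x| < 1 := by
    rw [hxdef, abs_div, abs_of_pos hsβ, div_lt_one hsβ]; exact hω
  have hax : |(|x|)| < 1 := by rwa [abs_abs]
  set G : ℕ → ℝ → ℝ := fun r t =>
    ((∏ i ∈ Finset.range r, (δ + i)) * ω ^ r / (r.factorial * Real.Gamma (β * r + γ))) *
      (t ^ (β * r + γ - 1) * Real.exp (-(s * t))) with hG
  have hΓr : ∀ r : ℕ, 0 < Real.Gamma (β * r + γ) := fun r =>
    Real.Gamma_pos_of_pos (by positivity)
  -- rewrite the integrand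
  have hcongr : ∀ t ∈ Set.Ioi (0:ℝ),
      Real.exp (-(s * t)) * t ^ (γ - 1) * gml β γ δ (ω * t ^ β) = ∑' r : ℕ, G r t := by
    intro t ht
    have ht' : (0:ℝ) < t := ht
    rw [gml, ← tsum_mul_left]
    refine tsum_congr fun r => ?_
    simp only [hG]
    have h1 : (ω * t ^ β) ^ r = ω ^ r * t ^ (β * r) := by
      rw [mul_pow, ← Real.rpow_natCast (t ^ β) r, ← Real.rpow_mul ht'.le]
    have h2 : t ^ (β * r + γ - 1) = t ^ (γ - 1) * t ^ (β * (r:ℝ)) := by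
      rw [← Real.rpow_add ht']; ring_nf
    rw [h1, h2]
    ring
  rw [setIntegral_congr_fun measurableSet_Ioi hcongr]
  -- termwise integrability
  have hGint : ∀ r : ℕ, Integrable (G r) (volume.restrict (Set.Ioi 0)) := fun r =>
    (integrableOn_gamma_kernel (a := β * r + γ) (by positivity) hs0).const_mul _
  have hsplit : ∀ r : ℕ, (1 / s) ^ (β * (r:ℝ) + γ) = ((s ^ β)⁻¹) ^ r * (1 / s) ^ γ := by
    intro r
    rw [one_div, Real.rpow_add (inv_pos.mpr hs0), Real.rpow_mul (inv_nonneg.mpr hs0.le),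
      Real.inv_rpow hs0.le, Real.rpow_natCast]
  have hGval : ∀ r : ℕ, (∫ t in Set.Ioi 0, G r t)
      = ((∏ i ∈ Finset.range r, (δ + i)) * x ^ r / r.factorial) * (1 / s) ^ γ := by
    intro r
    simp only [hG]
    rw [integral_const_mul, integral_rpow_mul_exp_neg_mul_Ioi (by positivity) hs0,
      hsplit r, hxdef]
    have h3 : (ω / s ^ β) ^ r = ω ^ r * ((s ^ β)⁻¹) ^ r := by
      rw [div_eq_mul_inv, mul_pow]
    rw [h3]
    have h4 := (hΓr r).ne'
    have h5 : ((r.factorial : ℝ)) ≠ 0 := Nat.cast_ne_zero.mpr r.factorial_ne_zero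
    field_simp
  have hGnorm : ∀ r : ℕ, (∫ t in Set.Ioi 0, ‖G r t‖)
      = ((∏ i ∈ Finset.range r, (δ + i)) * |x| ^ r / r.factorial) * (1 / s) ^ γ := by
    intro r
    have habs : ∀ t ∈ Set.Ioi (0:ℝ), ‖G r t‖ =
        ((∏ i ∈ Finset.range r, (δ + i)) * |ω| ^ r / (r.factorial * Real.Gamma (β * r + γ))) *
          (t ^ (β * r + γ - 1) * Real.exp (-(s * t))) := by
      intro t ht
      simp only [hG]
      rw [norm_mul, Real.norm_eq_abs, Real.norm_eq_abs,
        abs_of_nonneg (mul_nonneg (Real.rpow_nonneg (le_of_lt ht) _) (Real.exp_pos _).le),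
        abs_div, abs_mul, abs_pow, abs_of_pos (poch_pos hδ r),
        abs_of_pos (by positivity : (0:ℝ) < (r.factorial : ℝ) * Real.Gamma (β * r + γ))]
    rw [setIntegral_congr_fun measurableSet_Ioi habs,
      integral_const_mul, integral_rpow_mul_exp_neg_mul_Ioi (by positivity) hs0,
      hsplit r]
    have h3 : |x| ^ r = |ω| ^ r * ((s ^ β)⁻¹) ^ r := by
      rw [hxdef, abs_div, abs_of_pos hsβ, div_eq_mul_inv, mul_pow]
    rw [h3]
    have h4 := (hΓr r).ne'
    have h5 : ((r.factorial : ℝ)) ≠ 0 := Nat.cast_ne_zero.mpr r.factorial_ne_zero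
    field_simp
  have hGnormsum : Summable fun r : ℕ => ∫ t in Set.Ioi 0, ‖G r t‖ := by
    refine (((summable_poch hδ hax).mul_right ((1/s) ^ γ))).congr fun r => ?_
    rw [hGnorm r]
  rw [← MeasureTheory.integral_tsum_of_summable_integral_norm hGint hGnormsum]
  rw [tsum_congr hGval, tsum_mul_right, (hasSum_binomial hδ hxlt).tsum_eq]
  -- final algebra
  have h1x : 1 - x = (s ^ β - ω) / s ^ β := by rw [hxdef]; field_simp
  rw [h1x, Real.div_rpow hsub.le hsβ.le, Real.rpow_neg hsub.le, Real.rpow_neg hsβ.le,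
    ← Real.rpow_mul hs0.le, one_div, Real.inv_rpow hs0.le, ← Real.rpow_neg hs0.le,
    show β * δ - γ = β * δ + (-γ) by ring, Real.rpow_add hs0]
  have h6 : (s ^ (β * δ)) ≠ 0 := (Real.rpow_pos_of_pos hs0 _).ne'
  have h7 : ((s ^ β - ω) ^ δ) ≠ 0 := (Real.rpow_pos_of_pos hsub _).ne'
  field_simp
  have e1 : s ^ (β * δ) * s ^ (-(β * δ)) = 1 := by
    rw [← Real.rpow_add hs0]; norm_num
  have e2 : s ^ (-γ) * s ^ γ = 1 := by
    rw [← Real.rpow_add hs0]; norm_num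
  rw [show s ^ (-(β * δ)) * s ^ γ * s ^ (β * δ) * s ^ (-γ)
      = (s ^ (β * δ) * s ^ (-(β * δ))) * (s ^ (-γ) * s ^ γ) from by ring,
    e1, e2]
  ring
end

section
/- For every λ > 0 and every integer k ≥ 0, E_{1/2, k/2 + 1}^{k+1}(-λ) = (1/k!) ∫₀^∞ e^{-λ y} y^{k} e^{-y²/4} / √π dy. -/
open Real MeasureTheory

lemma real_exp_tsum (x : ℝ) : Real.exp x = ∑' n : ℕ, x ^ n / n.factorial := by
  rw [Real.exp_eq_exp_ℝ, NormedSpace.exp_eq_tsum_div]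

lemma intA (n : ℕ) :
    ∫ y in Set.Ioi (0:ℝ), y ^ n * Real.exp (-(y ^ 2 / 4)) =
      2 ^ n * Real.Gamma (((n : ℝ) + 1) / 2) := by
  have hq : (-1 : ℝ) < (n : ℝ) := by
    have := Nat.cast_nonneg (α := ℝ) n; linarith
  have h := integral_rpow_mul_exp_neg_mul_rpow (p := 2) (q := (n : ℝ)) (b := 1/4)
    two_pos hq (by norm_num)
  have hL : (∫ y in Set.Ioi (0:ℝ), y ^ (n : ℝ) * Real.exp (-(1/4) * y ^ (2:ℝ))) =
      ∫ y in Set.Ioi (0:ℝ), y ^ n * Real.exp (-(y ^ 2 / 4)) := by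
    refine setIntegral_congr_fun measurableSet_Ioi (fun y hy => ?_)
    rw [Real.rpow_natCast, show (2:ℝ) = ((2:ℕ):ℝ) by norm_num, Real.rpow_natCast]
    ring_nf
  rw [hL] at h
  rw [h]
  have h4 : ((1:ℝ)/4) ^ (-(((n:ℝ)) + 1) / 2) = (2:ℝ) ^ ((n:ℝ) + 1) := by
    rw [show (1/4:ℝ) = (2:ℝ) ^ (-2:ℝ) by
      rw [Real.rpow_neg (by norm_num), show (2:ℝ) = ((2:ℕ):ℝ) by norm_num,
        Real.rpow_natCast]; norm_num]
    rw [← Real.rpow_mul (by norm_num)]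
    congr 1
    ring
  rw [h4, show ((n:ℝ) + 1) = (((n+1:ℕ)):ℝ) by push_cast; ring, Real.rpow_natCast]
  rw [pow_succ]
  ring_nf

lemma dup (n : ℕ) :
    (2:ℝ) ^ n * Real.Gamma (((n:ℝ) + 1) / 2) / Real.sqrt π
      = (n.factorial : ℝ) / Real.Gamma ((n:ℝ) / 2 + 1) := by
  have h := Real.Gamma_mul_Gamma_add_half (((n:ℝ) + 1) / 2)
  rw [show ((n:ℝ)+1)/2 + 1/2 = (n:ℝ)/2 + 1 by ring,
    show 2 * (((n:ℝ)+1)/2) = (n:ℝ)+1 by ring,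
    Real.Gamma_nat_eq_factorial,
    show (1 - ((n:ℝ)+1)) = -(n:ℝ) by ring,
    Real.rpow_neg (by norm_num), Real.rpow_natCast] at h
  have ha : 0 < Real.Gamma (((n:ℝ)+1)/2) := Real.Gamma_pos_of_pos (by positivity)
  have hb : 0 < Real.Gamma ((n:ℝ)/2 + 1) := Real.Gamma_pos_of_pos (by positivity)
  have hs : 0 < Real.sqrt π := Real.sqrt_pos.mpr Real.pi_pos
  have h2 : (0:ℝ) < 2 ^ n := by positivity
  field_simp
  field_simp at h
  nlinarith [h]

lemma prod_lem (k r : ℕ) :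
    (∏ i ∈ Finset.range r, ((k:ℝ) + 1 + i)) = ((k+r).factorial : ℝ) / (k.factorial : ℝ) := by
  induction r with
  | zero => simp [div_self (Nat.cast_ne_zero.mpr (Nat.factorial_ne_zero k) : (k.factorial:ℝ) ≠ 0)]
  | succ r ih =>
    rw [Finset.prod_range_succ, ih, show k + (r+1) = (k+r)+1 from rfl, Nat.factorial_succ]
    have : (k.factorial : ℝ) ≠ 0 := Nat.cast_ne_zero.mpr (Nat.factorial_ne_zero k)
    push_cast
    field_simp
    ring

lemma intg (n : ℕ) :
    IntegrableOn (fun y : ℝ => y ^ n * Real.exp (-(y ^ 2 / 4))) (Set.Ioi 0) := by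
  have h := integrableOn_rpow_mul_exp_neg_mul_sq (b := (1:ℝ)/4) (by norm_num)
    (s := (n:ℝ)) (by have := Nat.cast_nonneg (α := ℝ) n; linarith)
  refine h.congr_fun (fun y hy => ?_) measurableSet_Ioi
  beta_reduce
  rw [Real.rpow_natCast]
  ring_nf

lemma intg2 (lam : ℝ) (k : ℕ) :
    IntegrableOn (fun y : ℝ => Real.exp (lam * y) * (y ^ k * Real.exp (-(y ^ 2 / 4))))
      (Set.Ioi 0) := by
  have hg := ((integrableOn_rpow_mul_exp_neg_mul_sq (b := (1:ℝ)/8) (by norm_num)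
    (s := (k:ℝ)) (by have := Nat.cast_nonneg (α := ℝ) k; linarith)).const_mul
      (Real.exp (2*lam^2)))
  refine Integrable.mono' hg ?_ ?_
  · exact (by fun_prop : Continuous
      (fun y : ℝ => Real.exp (lam * y) * (y ^ k * Real.exp (-(y ^ 2 / 4))))).aestronglyMeasurable
  · filter_upwards [ae_restrict_mem measurableSet_Ioi] with y hy
    have hy0 : (0:ℝ) < y := hy
    rw [Real.norm_eq_abs, abs_of_nonneg (by positivity), Real.rpow_natCast]
    have key : lam * y + -(y ^ 2 / 4) ≤ 2 * lam ^ 2 + -(1/8) * y ^ 2 := by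
      nlinarith [sq_nonneg (y - 4 * lam)]
    calc Real.exp (lam * y) * (y ^ k * Real.exp (-(y ^ 2 / 4)))
        = y ^ k * Real.exp (lam * y + -(y ^ 2 / 4)) := by rw [Real.exp_add]; ring
      _ ≤ y ^ k * Real.exp (2 * lam ^ 2 + -(1/8) * y ^ 2) := by
          exact mul_le_mul_of_nonneg_left (Real.exp_le_exp.mpr key) (by positivity)
      _ = Real.exp (2 * lam ^ 2) * (y ^ k * Real.exp (-(1/8) * y ^ 2)) := by
          rw [Real.exp_add]; ring

/-- For `λ > 0` and `k ≥ 0`: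
`E_{1/2,k/2+1}^{k+1}(-λ) = (1/k!) ∫₀^∞ e^{-λy} y^k e^{-y²/4}/√π dy`. -/
theorem gml_half_eq_gaussian_integral (lam : ℝ) (hlam : 0 < lam) (k : ℕ) :
    gml (1 / 2) ((k : ℝ) / 2 + 1) (k + 1) (-lam)
      = (1 / (k.factorial : ℝ)) *
          ∫ y in Set.Ioi (0 : ℝ),
            Real.exp (-(lam * y)) * y ^ k * Real.exp (-(y ^ 2 / 4)) /
              Real.sqrt π := by
  have hsqrt : 0 < Real.sqrt π := Real.sqrt_pos.mpr Real.pi_pos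
  set F : ℕ → ℝ → ℝ := fun r y =>
    (-(lam * y)) ^ r / r.factorial * (y ^ k * Real.exp (-(y ^ 2 / 4)) / Real.sqrt π) with hF
  -- Step 1: pointwise series expansion of the integrand
  have h1 : ∀ y : ℝ,
      Real.exp (-(lam * y)) * y ^ k * Real.exp (-(y ^ 2 / 4)) / Real.sqrt π
        = ∑' r : ℕ, F r y := by
    intro y
    simp only [hF]
    rw [tsum_mul_right, ← real_exp_tsum]
    ring
  -- measurability
  have hmeas : ∀ r : ℕ, AEStronglyMeasurable (F r) (volume.restrict (Set.Ioi 0)) := by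
    intro r
    exact (by fun_prop : Continuous (F r)).aestronglyMeasurable
  -- the nonnegative majorant
  set G : ℕ → ℝ → ℝ := fun r y =>
    (lam * y) ^ r / r.factorial * (y ^ k * Real.exp (-(y ^ 2 / 4)) / Real.sqrt π) with hG
  -- Step 2: finiteness of the sum of lintegrals of norms
  have hfin : (∑' r : ℕ, ∫⁻ y in Set.Ioi (0:ℝ), (‖F r y‖₊ : ENNReal)) ≠ ⊤ := by
    have heq : ∀ r : ℕ, (∫⁻ y in Set.Ioi (0:ℝ), (‖F r y‖₊ : ENNReal))
        = ∫⁻ y in Set.Ioi (0:ℝ), ENNReal.ofReal (G r y) := by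
      intro r
      refine setLIntegral_congr_fun measurableSet_Ioi
        (fun y hy => ?_)
      rw [show ((‖F r y‖₊ : ENNReal)) = ENNReal.ofReal ‖F r y‖ from (ENNReal.ofReal_eq_coe_nnreal (norm_nonneg (F r y))).symm, Real.norm_eq_abs]
      congr 1
      have hy0 : (0:ℝ) < y := hy
      simp only [hF, hG]
      rw [abs_mul, abs_div, abs_pow, abs_neg, abs_of_nonneg (by positivity : (0:ℝ) ≤ lam * y),
        abs_of_nonneg (by positivity : (0:ℝ) ≤ y ^ k * Real.exp (-(y ^ 2 / 4)) / Real.sqrt π),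
        Nat.abs_cast]
    rw [tsum_congr heq, ← lintegral_tsum (fun r =>
      ((by fun_prop : Continuous (G r)).measurable.ennreal_ofReal).aemeasurable)]
    have heq2 : (∫⁻ y in Set.Ioi (0:ℝ), ∑' r : ℕ, ENNReal.ofReal (G r y))
        = ∫⁻ y in Set.Ioi (0:ℝ),
            ENNReal.ofReal (Real.exp (lam * y) * (y ^ k * Real.exp (-(y ^ 2 / 4))) /
              Real.sqrt π) := by
      refine setLIntegral_congr_fun measurableSet_Ioi
        (fun y hy => ?_)
      have hy0 : (0:ℝ) < y := hy
      rw [← ENNReal.ofReal_tsum_of_nonneg (f := fun r => G r y) (fun r => by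
          simp only [hG]; positivity)
        (by simpa only [hG] using
          ((Real.summable_pow_div_factorial (lam * y)).mul_right
            (y ^ k * Real.exp (-(y ^ 2 / 4)) / Real.sqrt π)))]
      congr 1
      simp only [hG]
      rw [tsum_mul_right, ← real_exp_tsum]
      ring
    rw [heq2]
    have hint : IntegrableOn (fun y : ℝ =>
        Real.exp (lam * y) * (y ^ k * Real.exp (-(y ^ 2 / 4))) / Real.sqrt π) (Set.Ioi 0) :=
      (intg2 lam k).div_const _
    have hnn : 0 ≤ᵐ[volume.restrict (Set.Ioi (0:ℝ))] fun y : ℝ =>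
        Real.exp (lam * y) * (y ^ k * Real.exp (-(y ^ 2 / 4))) / Real.sqrt π := by
      filter_upwards [ae_restrict_mem measurableSet_Ioi] with y hy
      have hy0 : (0:ℝ) < y := hy
      positivity
    exact ((hasFiniteIntegral_iff_ofReal hnn).mp hint.hasFiniteIntegral).ne
  -- Step 3: exchange sum and integral
  have hInt : (∫ y in Set.Ioi (0:ℝ),
      Real.exp (-(lam * y)) * y ^ k * Real.exp (-(y ^ 2 / 4)) / Real.sqrt π)
        = ∑' r : ℕ, ∫ y in Set.Ioi (0:ℝ), F r y := by
    rw [integral_congr_ae (Filter.Eventually.of_forall h1)]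
    exact integral_tsum hmeas hfin
  rw [hInt, ← tsum_mul_left]
  unfold gml
  refine tsum_congr fun r => ?_
  -- Step 4: compute each integral
  have hIr : (∫ y in Set.Ioi (0:ℝ), F r y)
      = (-lam) ^ r / (r.factorial * Real.sqrt π) *
          (2 ^ (k + r) * Real.Gamma ((((k + r : ℕ) : ℝ) + 1) / 2)) := by
    have hpt : ∀ y : ℝ, F r y
        = (-lam) ^ r / (r.factorial * Real.sqrt π) *
            (y ^ (k + r) * Real.exp (-(y ^ 2 / 4))) := by
      intro y; simp only [hF]; ring
    rw [integral_congr_ae (Filter.Eventually.of_forall hpt), MeasureTheory.integral_const_mul, intA (k + r)]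
  rw [hIr, prod_lem k r,
    show (1:ℝ)/2 * r + ((k:ℝ)/2 + 1) = ((k + r : ℕ):ℝ)/2 + 1 by push_cast; ring]
  have hdup := dup (k + r)
  have hb : 0 < Real.Gamma (((k + r : ℕ):ℝ)/2 + 1) := Real.Gamma_pos_of_pos (by positivity)
  rw [show (1:ℝ)/(k.factorial:ℝ) * ((-lam)^r / (r.factorial * Real.sqrt π) *
      (2^(k+r) * Real.Gamma ((((k + r : ℕ):ℝ) + 1)/2)))
    = 1/(k.factorial:ℝ) * ((-lam)^r / (r.factorial:ℝ) *
      ((2:ℝ)^(k+r) * Real.Gamma ((((k + r : ℕ):ℝ) + 1)/2) / Real.sqrt π)) by ring, hdup]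
  have hk : ((k.factorial:ℝ)) ≠ 0 := Nat.cast_ne_zero.mpr (Nat.factorial_ne_zero k)
  have hr : ((r.factorial:ℝ)) ≠ 0 := Nat.cast_ne_zero.mpr (Nat.factorial_ne_zero r)
  field_simp
end

section
/- For every ν ∈ (0,1], λ > 0, t > 0 and every integer k ≥ 1, the following identity between generalized Mittag-Leffler functions holds: λ^{k} t^{νk} E_{ν, νk+1}^{k}(-λ t^{ν}) - λ^{k+1} t^{ν(k+1)} E_{ν, ν(k+1)+1}^{k+1}(-λ t^{ν}) = (λ t^{ν})^{k} E_{ν, νk+1}^{k+1}(-λ t^{ν}). -/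
open Real

open Filter

lemma gamma_mul_le {ν y : ℝ} (hν : 0 < ν) (hν1 : ν ≤ 1) (hy : 0 < y) :
    y * Real.Gamma y ≤ Real.Gamma (y + ν) * (y + ν) ^ (1 - ν) := by
  have hyν : 0 < y + ν := by linarith
  rcases eq_or_lt_of_le hν1 with h1 | h1
  · subst h1
    rw [← Real.Gamma_add_one hy.ne', sub_self, Real.rpow_zero, mul_one]
  · have key := Real.Gamma_mul_add_mul_le_rpow_Gamma_mul_rpow_Gamma
      (s := y + ν) (t := y + ν + 1) (a := ν) (b := 1 - ν) hyν (by linarith) hν (by linarith) (by ring)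
    have harg : ν * (y + ν) + (1 - ν) * (y + ν + 1) = y + 1 := by ring
    rw [harg, Real.Gamma_add_one hy.ne', Real.Gamma_add_one hyν.ne'] at key
    calc y * Real.Gamma y ≤ Real.Gamma (y + ν) ^ ν * ((y + ν) * Real.Gamma (y + ν)) ^ (1 - ν) := key
      _ = Real.Gamma (y + ν) * (y + ν) ^ (1 - ν) := by
          rw [Real.mul_rpow hyν.le (Real.Gamma_pos_of_pos hyν).le,
            mul_comm ((y+ν) ^ (1-ν)), ← mul_assoc,
            ← Real.rpow_add (Real.Gamma_pos_of_pos hyν)]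
          norm_num

lemma summable_gml {ν β γ x : ℝ} (hν : 0 < ν) (hν1 : ν ≤ 1) (hβ : 0 < β) (hγ : 0 < γ)
    (hx : x ≠ 0) :
    Summable (fun r : ℕ => (∏ i ∈ Finset.range r, (γ + i)) * x ^ r /
      (r.factorial * Real.Gamma (ν * r + β))) := by
  set a : ℕ → ℝ := fun r => (∏ i ∈ Finset.range r, (γ + i)) * x ^ r /
      (r.factorial * Real.Gamma (ν * r + β)) with ha
  have hP : ∀ r : ℕ, 0 < ∏ i ∈ Finset.range r, (γ + (i : ℝ)) := by
    intro r; exact Finset.prod_pos fun i _ => by positivity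
  have hΓ : ∀ r : ℕ, 0 < Real.Gamma (ν * r + β) := by
    intro r; exact Real.Gamma_pos_of_pos (by positivity)
  have hfac : ∀ r : ℕ, (0:ℝ) < r.factorial := fun r => by positivity
  have hne : ∀ r : ℕ, a r ≠ 0 := by
    intro r
    exact div_ne_zero (mul_ne_zero (hP r).ne' (pow_ne_zero _ hx))
      (mul_ne_zero (hfac r).ne' (hΓ r).ne')
  have habs : ∀ r : ℕ, ‖a r‖ = (∏ i ∈ Finset.range r, (γ + i)) * |x| ^ r /
      (r.factorial * Real.Gamma (ν * r + β)) := by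
    intro r
    rw [ha]
    rw [Real.norm_eq_abs, abs_div, abs_mul, abs_pow, abs_of_pos (hP r),
      abs_of_pos (mul_pos (hfac r) (hΓ r))]
  have hxa : (0:ℝ) < |x| := abs_pos.mpr hx
  have E : ∀ r : ℕ, ‖a (r+1)‖ / ‖a r‖ =
      ((γ + r) / (r + 1)) * |x| * (Real.Gamma (ν * r + β) / Real.Gamma ((ν * r + β) + ν)) := by
    intro r
    have hcast : ν * ((r:ℕ)+1:ℕ) + β = (ν * r + β) + ν := by push_cast; ring
    have h1 := habs (r+1)
    rw [hcast, Finset.prod_range_succ, Nat.factorial_succ, pow_succ] at h1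
    rw [h1, habs r]
    have h2 : (0:ℝ) < Real.Gamma ((ν * r + β) + ν) := Real.Gamma_pos_of_pos (by positivity)
    have h3 : (0:ℝ) < γ + r := by positivity
    push_cast
    field_simp
  apply summable_of_ratio_test_tendsto_lt_one (l := 0) one_pos (Eventually.of_forall hne)
  apply squeeze_zero' (Eventually.of_forall fun r => by positivity)
    (g := fun r : ℕ => (γ + 1) * |x| * (2 * (ν * r + β + ν) ^ (-ν)))
  · filter_upwards [eventually_ge_atTop 1] with r hr
    rw [E r]
    have hy : (0:ℝ) < ν * r + β := by positivity
    have hyν : (0:ℝ) < ν * r + β + ν := by positivity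
    have hΓν : (0:ℝ) < Real.Gamma ((ν * r + β) + ν) := Real.Gamma_pos_of_pos hyν
    have b1 : (γ + r) / (r + 1) ≤ γ + 1 := by
      rw [div_le_iff₀ (by positivity)]
      have : (1:ℝ) ≤ r := by exact_mod_cast hr
      nlinarith
    have b2 : Real.Gamma (ν * r + β) / Real.Gamma ((ν * r + β) + ν) ≤
        2 * (ν * r + β + ν) ^ (-ν) := by
      have hkey := gamma_mul_le hν hν1 hy
      have step1 : Real.Gamma (ν * r + β) / Real.Gamma ((ν * r + β) + ν) ≤
          (ν * r + β + ν) ^ (1 - ν) / (ν * r + β) := by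
        rw [div_le_div_iff₀ hΓν hy]
        linarith [hkey]
      refine step1.trans ?_
      have hsplit : (ν * r + β + ν) ^ (1 - ν) = (ν * r + β + ν) * (ν * r + β + ν) ^ (-ν) := by
        rw [show (1 - ν) = 1 + (-ν) by ring, Real.rpow_add hyν, Real.rpow_one]
      rw [hsplit]
      have hle : ν * r + β + ν ≤ 2 * (ν * r + β) := by
        have : (1:ℝ) ≤ r := by exact_mod_cast hr
        nlinarith
      rw [div_le_iff₀ hy]
      have hrp : (0:ℝ) ≤ (ν * r + β + ν) ^ (-ν) := Real.rpow_nonneg hyν.le _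
      calc (ν * r + β + ν) * (ν * r + β + ν) ^ (-ν)
          ≤ (2 * (ν * r + β)) * (ν * r + β + ν) ^ (-ν) := by
            exact mul_le_mul_of_nonneg_right hle hrp
        _ = 2 * (ν * r + β + ν) ^ (-ν) * (ν * r + β) := by ring
    exact mul_le_mul (mul_le_mul_of_nonneg_right b1 hxa.le) b2 (by positivity) (by positivity)
  · have harg : Tendsto (fun r : ℕ => ν * r + β + ν) atTop atTop := by
      apply tendsto_atTop_add_const_right
      apply tendsto_atTop_add_const_right
      exact Tendsto.const_mul_atTop hν tendsto_natCast_atTop_atTop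
    have h0 : Tendsto (fun r : ℕ => (ν * r + β + ν) ^ (-ν)) atTop (nhds 0) :=
      (tendsto_rpow_neg_atTop hν).comp harg
    have := h0.const_mul ((γ + 1) * |x| * 2)
    simpa [mul_assoc] using this

/-- For `ν ∈ (0,1]`, `λ > 0`, `t > 0` and `k ≥ 1`:
`λ^k t^{νk} E_{ν,νk+1}^k(-λ t^ν) - λ^{k+1} t^{ν(k+1)} E_{ν,ν(k+1)+1}^{k+1}(-λ t^ν)
 = (λ t^ν)^k E_{ν,νk+1}^{k+1}(-λ t^ν)`. -/
theorem gml_difference_identity (ν lam t : ℝ) (hν : 0 < ν) (hν1 : ν ≤ 1)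
    (hlam : 0 < lam) (ht : 0 < t) (k : ℕ) (hk : 1 ≤ k) :
    lam ^ k * t ^ (ν * k) * gml ν (ν * k + 1) k (-(lam * t ^ ν))
      - lam ^ (k + 1) * t ^ (ν * (k + 1)) *
          gml ν (ν * (k + 1) + 1) (k + 1) (-(lam * t ^ ν))
      = (lam * t ^ ν) ^ k * gml ν (ν * k + 1) (k + 1) (-(lam * t ^ ν)) := by
  have htν : 0 < t ^ ν := Real.rpow_pos_of_pos ht ν
  set X : ℝ := -(lam * t ^ ν) with hX
  have hXne : X ≠ 0 := neg_ne_zero.mpr (mul_pos hlam htν).ne'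
  have hkpos : (0:ℝ) < (k:ℝ) := by exact_mod_cast hk
  have hβ1 : (0:ℝ) < ν * k + 1 := by positivity
  have hβ2 : (0:ℝ) < ν * ((k:ℝ) + 1) + 1 := by positivity
  have SF : Summable (fun r : ℕ => (∏ i ∈ Finset.range r, ((k:ℝ) + i)) * X ^ r /
      (r.factorial * Real.Gamma (ν * r + (ν * k + 1)))) :=
    summable_gml hν hν1 hβ1 hkpos hXne
  have SG : Summable (fun r : ℕ => (∏ i ∈ Finset.range r, ((k:ℝ) + 1 + i)) * X ^ r /
      (r.factorial * Real.Gamma (ν * r + (ν * ((k:ℝ) + 1) + 1)))) :=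
    summable_gml hν hν1 hβ2 (by positivity) hXne
  have SH : Summable (fun r : ℕ => (∏ i ∈ Finset.range r, ((k:ℝ) + 1 + i)) * X ^ r /
      (r.factorial * Real.Gamma (ν * r + (ν * k + 1)))) :=
    summable_gml hν hν1 hβ1 (by positivity) hXne
  have hpt : ∀ r : ℕ,
      (∏ i ∈ Finset.range (r+1), ((k:ℝ) + 1 + i)) * X ^ (r+1) /
        ((r+1).factorial * Real.Gamma (ν * (r+1:ℕ) + (ν * k + 1)))
      = (∏ i ∈ Finset.range (r+1), ((k:ℝ) + i)) * X ^ (r+1) /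
          ((r+1).factorial * Real.Gamma (ν * (r+1:ℕ) + (ν * k + 1)))
        + X * ((∏ i ∈ Finset.range r, ((k:ℝ) + 1 + i)) * X ^ r /
            (r.factorial * Real.Gamma (ν * r + (ν * ((k:ℝ) + 1) + 1)))) := by
    intro r
    have hΓeq : ν * ((r:ℕ)+1:ℕ) + (ν * (k:ℝ) + 1) = ν * r + (ν * ((k:ℝ) + 1) + 1) := by
      push_cast; ring
    rw [hΓeq]
    have p1 : ∏ i ∈ Finset.range (r+1), ((k:ℝ) + 1 + i) =
        (∏ i ∈ Finset.range r, ((k:ℝ) + 1 + i)) * ((k:ℝ) + 1 + r) :=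
      Finset.prod_range_succ _ _
    have p2 : ∏ i ∈ Finset.range (r+1), ((k:ℝ) + i) =
        (k:ℝ) * ∏ i ∈ Finset.range r, ((k:ℝ) + 1 + i) := by
      rw [Finset.prod_range_succ']
      simp only [Nat.cast_zero, add_zero, Nat.cast_add, Nat.cast_one]
      rw [mul_comm]
      congr 1
      exact Finset.prod_congr rfl fun i _ => by ring
    have hΓpos : (0:ℝ) < Real.Gamma (ν * r + (ν * ((k:ℝ) + 1) + 1)) :=
      Real.Gamma_pos_of_pos (by positivity)
    have hfac : ((r.factorial : ℝ)) ≠ 0 := by positivity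
    rw [p1, p2, Nat.factorial_succ, pow_succ]
    push_cast
    field_simp
    ring
  have key : gml ν (ν * k + 1) (k + 1) X = gml ν (ν * k + 1) k X
      + X * gml ν (ν * (k + 1) + 1) (k + 1) X := by
    simp only [gml]
    rw [Summable.tsum_eq_zero_add SH, Summable.tsum_eq_zero_add SF]
    have e1 : ∑' r : ℕ, (∏ i ∈ Finset.range (r+1), ((k:ℝ) + 1 + i)) * X ^ (r+1) /
        ((r+1).factorial * Real.Gamma (ν * (r+1:ℕ) + (ν * k + 1)))
        = (∑' r : ℕ, (∏ i ∈ Finset.range (r+1), ((k:ℝ) + i)) * X ^ (r+1) /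
            ((r+1).factorial * Real.Gamma (ν * (r+1:ℕ) + (ν * k + 1))))
          + X * ∑' r : ℕ, (∏ i ∈ Finset.range r, ((k:ℝ) + 1 + i)) * X ^ r /
            (r.factorial * Real.Gamma (ν * r + (ν * ((k:ℝ) + 1) + 1))) := by
      rw [← tsum_mul_left]
      rw [← Summable.tsum_add ((summable_nat_add_iff 1).mpr SF) (SG.mul_left X)]
      exact tsum_congr hpt
    push_cast at e1 ⊢
    rw [e1]
    simp
    ring
  have hA : lam ^ k * t ^ (ν * k) = (lam * t ^ ν) ^ k := by
    rw [Real.rpow_mul ht.le, Real.rpow_natCast, mul_pow]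
  have hB : lam ^ (k+1) * t ^ (ν * ((k:ℝ) + 1)) = (lam * t ^ ν) ^ (k+1) := by
    have hc : ((k:ℝ) + 1) = ((k+1 : ℕ) : ℝ) := by push_cast; ring
    rw [hc, Real.rpow_mul ht.le, Real.rpow_natCast, mul_pow]
  rw [hA, hB, key]
  have hXr : lam * t ^ ν = -X := by rw [hX]; ring
  rw [hXr]
  ring
end

section
/- For every ν ∈ (0,1], every x > 0 and every u with 0 < u ≤ 1, the infinite sum of generalized Mittag-Leffler functions satisfies Σ_{k=0}^∞ (u x)^{k} E_{ν, νk+1}^{k+1}(-x) = E_{ν,1}(x(u - 1)). In particular, for u = 1 one has Σ_{k=0}^∞ x^{k} E_{ν, νk+1}^{k+1}(-x) = 1. -/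
open Real Filter Finset

-- Gamma growth lemma
lemma gamma_growth {ν : ℝ} (hν : 0 < ν) (hν1 : ν ≤ 1) {t : ℝ} (ht : 1 ≤ t) :
    Real.Gamma t * t ^ ν / 2 ≤ Real.Gamma (t + ν) := by
  have ht0 : 0 < t := lt_of_lt_of_le one_pos ht
  have hg0 : 0 < Real.Gamma t := Real.Gamma_pos_of_pos ht0
  rcases eq_or_lt_of_le hν1 with h1 | h1
  · subst h1
    rw [Real.Gamma_add_one ht0.ne', rpow_one]
    nlinarith
  · have hb : 0 < 1 - ν := by linarith
    have hs : 0 < t + ν := by linarith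
    have key := Real.Gamma_mul_add_mul_le_rpow_Gamma_mul_rpow_Gamma
      (s := t + ν) (t := t + ν + 1) hs (by linarith) hν hb (by ring)
    have harg : ν * (t + ν) + (1 - ν) * (t + ν + 1) = t + 1 := by ring
    rw [harg, Real.Gamma_add_one ht0.ne', Real.Gamma_add_one hs.ne'] at key
    have hgν : 0 < Real.Gamma (t + ν) := Real.Gamma_pos_of_pos hs
    have key2 : t * Real.Gamma t ≤ Real.Gamma (t + ν) * (t + ν) ^ (1 - ν) := by
      calc t * Real.Gamma t ≤ Real.Gamma (t+ν) ^ ν * ((t+ν) * Real.Gamma (t+ν)) ^ (1-ν) := key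
        _ = Real.Gamma (t+ν) ^ ν * Real.Gamma (t+ν) ^ (1-ν) * (t+ν) ^ (1-ν) := by
            rw [mul_rpow hs.le hgν.le]; ring
        _ = Real.Gamma (t + ν) * (t + ν) ^ (1 - ν) := by
            rw [← rpow_add hgν]; norm_num
    have hb2 : (t + ν) ^ (1 - ν) ≤ 2 * t ^ (1 - ν) := by
      calc (t + ν) ^ (1 - ν) ≤ (2 * t) ^ (1 - ν) := by
            apply rpow_le_rpow (by linarith) (by linarith) hb.le
        _ = 2 ^ (1 - ν) * t ^ (1 - ν) := mul_rpow (by norm_num) ht0.le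
        _ ≤ 2 * t ^ (1 - ν) := by
            have h2 : (2:ℝ) ^ (1 - ν) ≤ 2 ^ (1:ℝ) :=
              rpow_le_rpow_of_exponent_le one_le_two (by linarith)
            rw [rpow_one] at h2
            exact mul_le_mul_of_nonneg_right h2 (rpow_nonneg ht0.le _)
    have htν : t ^ ν * t ^ (1 - ν) = t := by
      rw [← rpow_add ht0]; norm_num
    have hp : 0 < t ^ (1 - ν) := rpow_pos_of_pos ht0 _
    rw [div_le_iff₀ (by norm_num : (0:ℝ) < 2), ← mul_le_mul_iff_left₀ hp]
    have key3 : t * Real.Gamma t ≤ Real.Gamma (t + ν) * (2 * t ^ (1 - ν)) := by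
      calc t * Real.Gamma t ≤ Real.Gamma (t + ν) * (t + ν) ^ (1 - ν) := key2
        _ ≤ Real.Gamma (t + ν) * (2 * t ^ (1 - ν)) := by
            exact mul_le_mul_of_nonneg_left hb2 hgν.le
    calc Real.Gamma t * t ^ ν * t ^ (1 - ν) = t * Real.Gamma t := by
          rw [mul_assoc, htν]; ring
      _ ≤ Real.Gamma (t + ν) * (2 * t ^ (1 - ν)) := key3
      _ = Real.Gamma (t + ν) * 2 * t ^ (1 - ν) := by ring

lemma summable_ml_aux {ν : ℝ} (hν : 0 < ν) (hν1 : ν ≤ 1) {c : ℝ} (hc : 0 ≤ c) :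
    Summable fun n : ℕ => c ^ n / Real.Gamma (ν * n + 1) := by
  apply summable_of_ratio_norm_eventually_le (r := 1/2) (by norm_num)
  have htend : Tendsto (fun n : ℕ => (ν * n + 1) ^ ν) atTop atTop := by
    apply (tendsto_rpow_atTop hν).comp
    apply tendsto_atTop_add_const_right
    exact Tendsto.const_mul_atTop hν tendsto_natCast_atTop_atTop
  filter_upwards [htend.eventually_ge_atTop (4 * c)] with n hn
  have hn0 : (0:ℝ) ≤ ν * n := mul_nonneg hν.le n.cast_nonneg
  set t := ν * (n : ℝ) + 1 with ht_def
  have ht1 : 1 ≤ t := by linarith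
  have ht0 : 0 < t := by linarith
  have hg0 : 0 < Real.Gamma t := Real.Gamma_pos_of_pos ht0
  have hg1 : 0 < Real.Gamma (t + ν) := Real.Gamma_pos_of_pos (by linarith)
  have h2 : 2 * c * Real.Gamma t ≤ Real.Gamma (t + ν) := by
    calc 2 * c * Real.Gamma t = Real.Gamma t * (4 * c) / 2 := by ring
      _ ≤ Real.Gamma t * t ^ ν / 2 := by
          apply div_le_div_of_nonneg_right ?_ (by norm_num)
          exact mul_le_mul_of_nonneg_left hn hg0.le
      _ ≤ Real.Gamma (t + ν) := gamma_growth hν hν1 ht1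
  have harg : ν * ((n : ℕ) + 1 : ℕ) + 1 = t + ν := by push_cast; ring
  rw [harg]
  rw [Real.norm_eq_abs, Real.norm_eq_abs, abs_div, abs_div, abs_pow, abs_pow,
    abs_of_nonneg hc, abs_of_nonneg hg0.le, abs_of_nonneg hg1.le]
  rw [div_le_iff₀ hg1]
  have heq : 1 / 2 * (c ^ n / Real.Gamma t) * Real.Gamma (t + ν)
      = c ^ n * Real.Gamma (t + ν) / (2 * Real.Gamma t) := by
    field_simp
  rw [heq, le_div_iff₀ (by positivity)]
  have hkey := mul_le_mul_of_nonneg_left h2 (pow_nonneg hc n)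
  rw [pow_succ]
  linarith [hkey]

/-- The two-parameter Mittag-Leffler function `E_{α,β}(x) = Σ_{r=0}^∞ x^r / Γ(αr+β)`. -/
noncomputable def ml (α β x : ℝ) : ℝ :=
  ∑' r : ℕ, x ^ r / Real.Gamma (α * r + β)

lemma prod_range_cast (k r : ℕ) :
    (∏ i ∈ Finset.range r, ((k : ℝ) + 1 + i)) = (r.factorial * (k + r).choose r : ℕ) := by
  have h : (∏ i ∈ Finset.range r, ((k : ℝ) + 1 + i)) = ((k + 1).ascFactorial r : ℕ) := by
    induction r with
    | zero => simp
    | succ r ih =>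
        rw [Finset.prod_range_succ, ih, Nat.ascFactorial_succ]
        push_cast; ring
  rw [h, Nat.ascFactorial_eq_factorial_mul_choose]

lemma sum_antidiag (a b : ℝ) (n : ℕ) :
    ∑ kl ∈ Finset.HasAntidiagonal.antidiagonal n, ((kl.1 + kl.2).choose kl.2 : ℝ) * a ^ kl.1 * b ^ kl.2
      = (a + b) ^ n := by
  rw [Finset.Nat.sum_antidiagonal_eq_sum_range_succ_mk, add_pow]
  apply Finset.sum_congr rfl
  intro k hk
  have hk' : k ≤ n := Nat.lt_succ_iff.mp (Finset.mem_range.mp hk)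
  rw [Nat.add_sub_cancel' hk', Nat.choose_symm hk']
  ring

lemma tsum_prod_eq_tsum_antidiagonal {F : ℕ × ℕ → ℝ} (hF : Summable F) :
    ∑' p : ℕ × ℕ, F p = ∑' n : ℕ, ∑ kl ∈ Finset.HasAntidiagonal.antidiagonal n, F kl := by
  calc ∑' p : ℕ × ℕ, F p
      = ∑' c : Σ n : ℕ, ↥(Finset.HasAntidiagonal.antidiagonal n), F (Finset.HasAntidiagonal.sigmaAntidiagonalEquivProd c) :=
        (Finset.HasAntidiagonal.sigmaAntidiagonalEquivProd.tsum_eq F).symm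
    _ = ∑' n : ℕ, ∑' c : ↥(Finset.HasAntidiagonal.antidiagonal n), F (Finset.HasAntidiagonal.sigmaAntidiagonalEquivProd ⟨n, c⟩) :=
        Summable.tsum_sigma' (fun n => (hasSum_fintype _).summable)
          (Finset.HasAntidiagonal.sigmaAntidiagonalEquivProd.summable_iff.mpr hF)
    _ = ∑' n : ℕ, ∑ kl ∈ Finset.HasAntidiagonal.antidiagonal n, F kl :=
        tsum_congr fun n => by rw [tsum_fintype]; exact Finset.sum_finset_coe _ _

lemma key_sum (ν x u : ℝ) (hν : 0 < ν) (hν1 : ν ≤ 1)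
    (hx : 0 < x) (hu : 0 < u) (hu1 : u ≤ 1) :
    (∑' k : ℕ, (u * x) ^ k * gml ν (ν * k + 1) (k + 1) (-x)) = ml ν 1 (x * (u - 1)) := by
  have hΓpos : ∀ s : ℝ, 0 ≤ s → 0 < Real.Gamma (ν * s + 1) := fun s hs =>
    Real.Gamma_pos_of_pos (by nlinarith)
  set F : ℕ × ℕ → ℝ := fun p =>
    ((p.1 + p.2).choose p.2 : ℝ) * (u * x) ^ p.1 * (-x) ^ p.2
      / Real.Gamma (ν * (p.1 + p.2) + 1) with hFdef
  set G : ℕ × ℕ → ℝ := fun p =>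
    ((p.1 + p.2).choose p.2 : ℝ) * (u * x) ^ p.1 * x ^ p.2
      / Real.Gamma (ν * (p.1 + p.2) + 1) with hGdef
  have hGpos : ∀ p, 0 ≤ G p := by
    intro p
    apply div_nonneg _ (hΓpos _ (by positivity)).le
    positivity
  -- the antidiagonal sums of G
  have hGsum : ∀ n : ℕ, (∑ kl ∈ Finset.HasAntidiagonal.antidiagonal n, G kl)
      = (u * x + x) ^ n / Real.Gamma (ν * n + 1) := by
    intro n
    have : ∀ kl ∈ Finset.HasAntidiagonal.antidiagonal n, G kl =
        ((kl.1 + kl.2).choose kl.2 : ℝ) * (u * x) ^ kl.1 * x ^ kl.2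
          / Real.Gamma (ν * n + 1) := by
      intro kl hkl
      rw [hGdef]
      simp only
      rw [Finset.HasAntidiagonal.mem_antidiagonal.mp hkl,
        show ((kl.1 : ℝ) + kl.2) = (n : ℝ) by exact_mod_cast Finset.HasAntidiagonal.mem_antidiagonal.mp hkl]
    rw [Finset.sum_congr rfl this, ← Finset.sum_div, sum_antidiag]
  have hG : Summable G := by
    apply Finset.HasAntidiagonal.sigmaAntidiagonalEquivProd.summable_iff.mp
    apply (summable_sigma_of_nonneg (fun σ => hGpos _)).mpr
    refine ⟨fun n => (hasSum_fintype _).summable, ?_⟩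
    apply Summable.congr (summable_ml_aux hν hν1 (c := u * x + x) (by positivity))
    intro n
    rw [tsum_fintype]
    rw [show (∑ kl : Finset.HasAntidiagonal.antidiagonal n,
        G (Finset.HasAntidiagonal.sigmaAntidiagonalEquivProd ⟨n, kl⟩)) = ∑ kl ∈ Finset.HasAntidiagonal.antidiagonal n, G kl
      from Finset.sum_finset_coe _ _, hGsum]
  have hF : Summable F := by
    apply Summable.of_norm
    apply Summable.of_nonneg_of_le (fun p => norm_nonneg _) _ hG
    intro p
    have h1 : 0 < Real.Gamma (ν * (p.1 + p.2) + 1) := hΓpos _ (by positivity)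
    rw [hFdef, hGdef]
    simp only [Real.norm_eq_abs, abs_div, abs_mul, abs_pow, abs_neg,
      abs_of_nonneg hx.le, abs_of_nonneg h1.le, abs_of_nonneg (by positivity : (0:ℝ) ≤ u * x),
      Nat.abs_cast]
    exact le_refl _
  -- rewrite the LHS as a double sum
  have hgml : ∀ k : ℕ, (u * x) ^ k * gml ν (ν * k + 1) (k + 1) (-x) = ∑' r : ℕ, F (k, r) := by
    intro k
    rw [gml, ← tsum_mul_left]
    apply tsum_congr
    intro r
    have harg : ν * (r : ℝ) + (ν * k + 1) = ν * ((k + r : ℕ) : ℝ) + 1 := by push_cast; ring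
    have h1 : 0 < Real.Gamma (ν * ((k + r : ℕ) : ℝ) + 1) := hΓpos _ (by positivity)
    have h2 : ((k : ℝ) + 1) = ((k : ℕ) : ℝ) + 1 := by norm_num
    rw [hFdef]
    simp only
    rw [show (∏ i ∈ Finset.range r, ((k : ℝ) + 1 + i)) = (r.factorial * (k + r).choose r : ℕ)
      from prod_range_cast k r, harg]
    have hfac : ((r.factorial : ℝ)) ≠ 0 := by exact_mod_cast r.factorial_ne_zero
    push_cast
    field_simp
  calc (∑' k : ℕ, (u * x) ^ k * gml ν (ν * k + 1) (k + 1) (-x))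
      = ∑' k : ℕ, ∑' r : ℕ, F (k, r) := tsum_congr hgml
    _ = ∑' p : ℕ × ℕ, F p := (Summable.tsum_prod' hF (fun k => hF.prod_factor k)).symm
    _ = ∑' n : ℕ, ∑ kl ∈ Finset.HasAntidiagonal.antidiagonal n, F kl := tsum_prod_eq_tsum_antidiagonal hF
    _ = ∑' n : ℕ, (x * (u - 1)) ^ n / Real.Gamma (ν * n + 1) := by
        apply tsum_congr
        intro n
        have : ∀ kl ∈ Finset.HasAntidiagonal.antidiagonal n, F kl =
            ((kl.1 + kl.2).choose kl.2 : ℝ) * (u * x) ^ kl.1 * (-x) ^ kl.2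
              / Real.Gamma (ν * n + 1) := by
          intro kl hkl
          rw [hFdef]
          simp only
          rw [Finset.HasAntidiagonal.mem_antidiagonal.mp hkl,
            show ((kl.1 : ℝ) + kl.2) = (n : ℝ) by exact_mod_cast Finset.HasAntidiagonal.mem_antidiagonal.mp hkl]
        rw [Finset.sum_congr rfl this, ← Finset.sum_div, sum_antidiag]
        norm_num
        rw [show u * x + -x = x * (u - 1) by ring]
    _ = ml ν 1 (x * (u - 1)) := rfl

/-- For `ν ∈ (0,1]`, `x > 0`, `0 < u ≤ 1`:
`Σ_{k=0}^∞ (ux)^k E_{ν,νk+1}^{k+1}(-x) = E_{ν,1}(x(u-1))`, and in particular for `u = 1`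
`Σ_{k=0}^∞ x^k E_{ν,νk+1}^{k+1}(-x) = 1`. -/
theorem gml_generating_function (ν x u : ℝ) (hν : 0 < ν) (hν1 : ν ≤ 1)
    (hx : 0 < x) (hu : 0 < u) (hu1 : u ≤ 1) :
    (∑' k : ℕ, (u * x) ^ k * gml ν (ν * k + 1) (k + 1) (-x)) = ml ν 1 (x * (u - 1))
      ∧ (∑' k : ℕ, x ^ k * gml ν (ν * k + 1) (k + 1) (-x)) = 1 := by
  constructor
  · exact key_sum ν x u hν hν1 hx hu hu1
  · have h := key_sum ν x 1 hν hν1 hx one_pos le_rfl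
    simp only [one_mul] at h
    rw [h, show x * (1 - 1) = 0 by ring]
    rw [ml, tsum_eq_single 0 (fun r hr => by rw [zero_pow hr, zero_div])]
    norm_num [Real.Gamma_one]
end

section
/- For every ν ∈ (0,1], λ > 0, t > 0 and every integer r ≥ 1, the r-th factorial moment of the distribution p_k^{ν}(t) = (λ t^{ν})^{k} E_{ν, νk+1}^{k+1}(-λ t^{ν}) satisfies Σ_{k=0}^∞ k(k-1)⋯(k-r+1) · (λ t^{ν})^{k} E_{ν, νk+1}^{k+1}(-λ t^{ν}) = (λ t^{ν})^{r} · r! / Γ(νr + 1). -/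
open Real

lemma fall_cast (r k : ℕ) :
    (∏ i ∈ Finset.range r, ((k : ℝ) - i)) = (k.descFactorial r : ℝ) := by
  induction r with
  | zero => simp
  | succ r ih =>
    rw [Finset.prod_range_succ, ih, Nat.descFactorial_succ]
    rcases le_or_gt r k with h | h
    · push_cast [h]; ring
    · rw [Nat.descFactorial_eq_zero_iff_lt.2 h, Nat.sub_eq_zero_of_le h.le]
      simp


lemma asc_cast (k j : ℕ) :
    (∏ i ∈ Finset.range j, ((k : ℝ) + 1 + i)) * (k.factorial : ℝ)
      = ((k + j).factorial : ℝ) := by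
  induction j with
  | zero => simp
  | succ j ih =>
    rw [Finset.prod_range_succ, mul_right_comm, ih]
    push_cast [Nat.factorial_succ, ← add_assoc]
    ring


lemma alt_sum_int (n r : ℕ) :
    ∑ k ∈ Finset.range (n + 1), (-1 : ℤ) ^ (n - k) * (n.choose k) * (k.descFactorial r)
      = if n = r then (r.factorial : ℤ) else 0 := by
  rcases lt_or_ge n r with h | h
  · rw [if_neg h.ne, Finset.sum_eq_zero]
    intro k hk
    rw [Finset.mem_range, Nat.lt_succ_iff] at hk
    rw [Nat.descFactorial_eq_zero_iff_lt.2 (lt_of_le_of_lt hk h)]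
    simp
  · have hsub : Finset.Ico r (n + 1) ⊆ Finset.range (n + 1) := by
      rw [Finset.range_eq_Ico]; exact Finset.Ico_subset_Ico (Nat.zero_le _) le_rfl
    have hzero : ∀ k ∈ Finset.range (n + 1), k ∉ Finset.Ico r (n + 1) →
        (-1 : ℤ) ^ (n - k) * (n.choose k) * (k.descFactorial r) = 0 := by
      intro k hk1 hk2
      simp only [Finset.mem_Ico, Finset.mem_range, not_and, not_le] at hk1 hk2
      have : k < r := by omega
      rw [Nat.descFactorial_eq_zero_iff_lt.2 this]
      simp
    rw [← Finset.sum_subset hsub hzero]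
    rw [Finset.sum_Ico_eq_sum_range]
    have key : ∀ i ∈ Finset.range (n + 1 - r),
        (-1 : ℤ) ^ (n - (r + i)) * (n.choose (r + i)) * ((r + i).descFactorial r)
          = ((-1 : ℤ) ^ (n - r) * (n.choose r) * r.factorial) * ((-1 : ℤ) ^ i * ((n - r).choose i)) := by
      intro i hi
      rw [Finset.mem_range] at hi
      have hin : r + i ≤ n := by omega
      have h1 : (n.choose (r + i)) * ((r + i).choose r) = n.choose r * (n - r).choose i := by
        have := Nat.choose_mul (n := n) (Nat.le_add_right r i)
        simpa using this
      have h2 : (r + i).descFactorial r = r.factorial * (r + i).choose r :=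
        Nat.descFactorial_eq_factorial_mul_choose _ _
      have h3 : (-1 : ℤ) ^ (n - (r + i)) * (-1 : ℤ) ^ i = (-1 : ℤ) ^ (n - r) := by
        rw [← pow_add]; congr 1; omega
      have hii : (-1 : ℤ) ^ i * (-1 : ℤ) ^ i = 1 := by
        rw [← pow_add]
        exact (neg_one_pow_eq_one_iff_even (by norm_num)).2 ⟨i, by ring⟩
      have h3' : (-1 : ℤ) ^ (n - (r + i)) = (-1 : ℤ) ^ (n - r) * (-1 : ℤ) ^ i := by
        calc (-1 : ℤ) ^ (n - (r + i)) = (-1 : ℤ) ^ (n - (r + i)) * ((-1 : ℤ) ^ i * (-1 : ℤ) ^ i) := by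
              rw [hii, mul_one]
          _ = ((-1 : ℤ) ^ (n - (r + i)) * (-1 : ℤ) ^ i) * (-1 : ℤ) ^ i := by ring
          _ = (-1 : ℤ) ^ (n - r) * (-1 : ℤ) ^ i := by rw [h3]
      rw [h3', h2]
      push_cast
      have h1' : ((n.choose (r + i) : ℤ)) * ((r + i).choose r) = (n.choose r : ℤ) * ((n - r).choose i) := by
        exact_mod_cast congrArg (Nat.cast : ℕ → ℤ) h1
      linear_combination ((-1 : ℤ) ^ (n - r) * (-1 : ℤ) ^ i * (r.factorial : ℤ)) * h1'
    rw [Finset.sum_congr rfl key, ← Finset.mul_sum]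
    have : n + 1 - r = (n - r) + 1 := by omega
    rw [this, Int.alternating_sum_range_choose]
    rcases eq_or_lt_of_le h with he | hlt
    · subst he; simp
    · rw [if_neg (by omega), if_neg (by omega)]; simp

lemma gamma_lb (ν : ℝ) (hν : 0 < ν) (a : ℝ) (ha : 2 ≤ a) :
    ∃ c > 0, ∀ n : ℕ, c * a ^ (ν * n) ≤ Real.Gamma (ν * n + 1) := by
  have ha0 : (0 : ℝ) < a := lt_of_lt_of_le two_pos ha
  have ha1 : (1 : ℝ) ≤ a := le_trans one_le_two ha
  set N : ℕ := ⌈1 / ν⌉₊ + 1 with hN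
  have hNe : (Finset.range N).Nonempty := ⟨0, by simp [hN]⟩
  set c1 : ℝ := (Finset.range N).inf' hNe (fun n => Real.Gamma (ν * n + 1) / a ^ (ν * n)) with hc1
  set c : ℝ := min c1 (Real.exp (-a) / a) with hc
  have hc1pos : 0 < c1 := by
    rw [hc1, Finset.lt_inf'_iff]
    intro n _
    exact div_pos (Real.Gamma_pos_of_pos (by positivity)) (Real.rpow_pos_of_pos ha0 _)
  have hcpos : 0 < c := lt_min hc1pos (div_pos (Real.exp_pos _) ha0)
  refine ⟨c, hcpos, fun n => ?_⟩
  have hag : (0 : ℝ) < a ^ (ν * n) := Real.rpow_pos_of_pos ha0 _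
  rcases lt_or_ge n N with hn | hn
  · have : c1 ≤ Real.Gamma (ν * n + 1) / a ^ (ν * n) :=
      Finset.inf'_le _ (Finset.mem_range.2 hn)
    have h4 : c ≤ Real.Gamma (ν * n + 1) / a ^ (ν * n) := le_trans (min_le_left _ _) this
    calc c * a ^ (ν * n) ≤ (Real.Gamma (ν * n + 1) / a ^ (ν * n)) * a ^ (ν * n) := by
          exact mul_le_mul_of_nonneg_right h4 hag.le
      _ = Real.Gamma (ν * n + 1) := div_mul_cancel₀ _ hag.ne'
  · -- ν * n ≥ 1
    have h1 : (1 : ℝ) ≤ ν * n := by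
      have h2 : (1 / ν : ℝ) ≤ N := le_trans (Nat.le_ceil _) (by exact_mod_cast Nat.le_succ _)
      have h3 : (N : ℝ) ≤ n := by exact_mod_cast hn
      calc (1 : ℝ) = ν * (1 / ν) := by field_simp
        _ ≤ ν * n := by nlinarith
    set m : ℕ := ⌊ν * n⌋₊ with hm
    have hm1 : 1 ≤ m := Nat.le_floor (by exact_mod_cast h1)
    have hmle : (m : ℝ) ≤ ν * n := Nat.floor_le (by positivity)
    have hmlt : ν * n < m + 1 := Nat.lt_floor_add_one _
    have hGm : Real.Gamma ((m : ℝ) + 1) ≤ Real.Gamma (ν * n + 1) := by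
      apply Real.Gamma_strictMonoOn_Ici.monotoneOn
      · simp only [Set.mem_Ici]
        have : (1 : ℝ) ≤ (m : ℝ) := by exact_mod_cast hm1
        linarith
      · simp only [Set.mem_Ici]; linarith
      · linarith
    rw [Real.Gamma_nat_eq_factorial] at hGm
    have hfact : Real.exp (-a) * a ^ m ≤ (m.factorial : ℝ) := by
      have := Real.pow_div_factorial_le_exp (x := a) ha0.le m
      rw [div_le_iff₀ (by positivity)] at this
      rw [Real.exp_neg]
      rw [inv_mul_le_iff₀ (Real.exp_pos _)]
      linarith [this]
    have hpow : a ^ (ν * n) / a ≤ (a : ℝ) ^ m := by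
      rw [div_le_iff₀ ha0]
      have h5 : a ^ (ν * n) ≤ a ^ ((m : ℝ) + 1) :=
        Real.rpow_le_rpow_of_exponent_le ha1 hmlt.le
      have h6 : a ^ ((m : ℝ) + 1) = a ^ m * a := by
        rw [Real.rpow_add ha0, Real.rpow_one, Real.rpow_natCast]
      linarith
    calc c * a ^ (ν * n) ≤ (Real.exp (-a) / a) * a ^ (ν * n) :=
          mul_le_mul_of_nonneg_right (min_le_right _ _) hag.le
      _ = Real.exp (-a) * (a ^ (ν * n) / a) := by ring
      _ ≤ Real.exp (-a) * a ^ m := mul_le_mul_of_nonneg_left hpow (Real.exp_pos _).le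
      _ ≤ (m.factorial : ℝ) := hfact
      _ ≤ Real.Gamma (ν * n + 1) := hGm

lemma asc_eq_choose (k j : ℕ) :
    (∏ i ∈ Finset.range j, ((k : ℝ) + 1 + i)) = ((k + j).choose j : ℝ) * j.factorial := by
  have h := asc_cast k j
  have h2 : ((k + j).choose j : ℕ) * j.factorial * k.factorial = (k + j).factorial := by
    have := Nat.choose_mul_factorial_mul_factorial (Nat.le_add_left j k)
    simpa [Nat.add_sub_cancel] using this
  have h2' : (((k + j).choose j : ℝ) * j.factorial) * k.factorial = ((k + j).factorial : ℝ) := by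
    exact_mod_cast congrArg (Nat.cast : ℕ → ℝ) h2
  have hk : (k.factorial : ℝ) ≠ 0 := by exact_mod_cast k.factorial_ne_zero
  exact mul_right_cancel₀ hk (h.trans h2'.symm)

lemma choose_le_two_pow (k r : ℕ) : k.choose r ≤ 2 ^ k := by
  rcases le_or_gt r k with h | h
  · calc k.choose r ≤ ∑ m ∈ Finset.range (k + 1), k.choose m :=
        Finset.single_le_sum (fun m _ => Nat.zero_le _) (Finset.mem_range.2 (Nat.lt_succ_of_le h))
    _ = 2 ^ k := Nat.sum_range_choose k
  · rw [Nat.choose_eq_zero_of_lt h]; exact Nat.zero_le _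

lemma alt_sum_real (n r : ℕ) :
    ∑ k ∈ Finset.range (n + 1), (-1 : ℝ) ^ (n - k) * (n.choose k) * (k.descFactorial r)
      = if n = r then (r.factorial : ℝ) else 0 := by
  have h := alt_sum_int n r
  have := congrArg (Int.cast : ℤ → ℝ) h
  push_cast at this
  convert this using 2 <;> simp

/-- For `ν ∈ (0,1]`, `λ > 0`, `t > 0` and `r ≥ 1`: the `r`-th factorial moment of
`p_k^ν(t) = (λt^ν)^k E_{ν,νk+1}^{k+1}(-λt^ν)` equals `(λt^ν)^r r! / Γ(νr+1)`.
Here `k(k-1)⋯(k-r+1)` is the falling factorial `∏_{i<r} (k-i)`. -/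
theorem fractional_poisson_factorial_moments (ν lam t : ℝ) (hν : 0 < ν)
    (hν1 : ν ≤ 1) (hlam : 0 < lam) (ht : 0 < t) (r : ℕ) (hr : 1 ≤ r) :
    ∑' k : ℕ, (∏ i ∈ Finset.range r, ((k : ℝ) - i)) *
        ((lam * t ^ ν) ^ k * gml ν (ν * k + 1) (k + 1) (-(lam * t ^ ν)))
      = (lam * t ^ ν) ^ r * r.factorial / Real.Gamma (ν * r + 1) := by
  set X : ℝ := lam * t ^ ν with hXdef
  have hX : 0 < X := by
    have : (0:ℝ) < t ^ ν := Real.rpow_pos_of_pos ht ν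
    positivity
  set F : ℕ × ℕ → ℝ := fun p =>
    (∏ i ∈ Finset.range r, ((p.1 : ℝ) - i)) *
      (X ^ p.1 * ((∏ i ∈ Finset.range p.2, ((p.1 : ℝ) + 1 + i)) * (-X) ^ p.2 /
        (p.2.factorial * Real.Gamma (ν * p.2 + (ν * p.1 + 1))))) with hFdef
  -- closed form for F
  have hGpos : ∀ n : ℕ, 0 < Real.Gamma (ν * n + 1) := fun n =>
    Real.Gamma_pos_of_pos (by positivity)
  have hFeq : ∀ k j : ℕ, F (k, j) =
      ((k.descFactorial r : ℝ) * ((k + j).choose j : ℝ)) *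
        (X ^ k * (-X) ^ j) / Real.Gamma (ν * ((k + j : ℕ) : ℝ) + 1) := by
    intro k j
    have hjf : (j.factorial : ℝ) ≠ 0 := by exact_mod_cast j.factorial_ne_zero
    have harg : ν * (j : ℝ) + (ν * k + 1) = ν * ((k + j : ℕ) : ℝ) + 1 := by push_cast; ring
    simp only [hFdef, fall_cast, asc_eq_choose, harg]
    field_simp
  -- norm bound
  set a : ℝ := max 2 ((8 * X) ^ (1 / ν)) with hadef
  have ha2 : (2:ℝ) ≤ a := le_max_left _ _
  have ha0 : (0:ℝ) < a := lt_of_lt_of_le two_pos ha2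
  obtain ⟨c, hc0, hcle⟩ := gamma_lb ν hν a ha2
  set Aν : ℝ := a ^ ν with hAdef
  have hA0 : 0 < Aν := Real.rpow_pos_of_pos ha0 ν
  have hA8X : 8 * X ≤ Aν := by
    have h1 : ((8 * X) ^ (1 / ν) : ℝ) ≤ a := le_max_right _ _
    have h2 : ((8 * X) ^ (1 / ν)) ^ ν ≤ a ^ ν :=
      Real.rpow_le_rpow (Real.rpow_nonneg (by positivity) _) h1 hν.le
    rwa [← Real.rpow_mul (by positivity : (0:ℝ) ≤ 8 * X), one_div,
      inv_mul_cancel₀ hν.ne', Real.rpow_one] at h2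
  have hrpow_pow : ∀ n : ℕ, a ^ (ν * n) = Aν ^ n := fun n => by
    rw [hAdef, ← Real.rpow_natCast (a ^ ν) n, ← Real.rpow_mul ha0.le]
  set u : ℝ := 4 * X / Aν with hudef
  set v : ℝ := 2 * X / Aν with hvdef
  have hu0 : 0 ≤ u := by positivity
  have hv0 : 0 ≤ v := by positivity
  have hu1 : u < 1 := by rw [hudef, div_lt_one hA0]; linarith
  have hv1 : v < 1 := by rw [hvdef, div_lt_one hA0]; linarith
  have hnorm : ∀ p : ℕ × ℕ, ‖F p‖ ≤ ((r.factorial : ℝ) / c) * (u ^ p.1 * v ^ p.2) := by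
    rintro ⟨k, j⟩
    rw [hFeq k j]
    have hGn := hGpos (k + j)
    have habs : ‖((k.descFactorial r : ℝ) * ((k + j).choose j : ℝ)) *
        (X ^ k * (-X) ^ j) / Real.Gamma (ν * ((k + j : ℕ) : ℝ) + 1)‖
        = ((k.descFactorial r : ℝ) * ((k + j).choose j : ℝ)) *
          (X ^ k * X ^ j) / Real.Gamma (ν * ((k + j : ℕ) : ℝ) + 1) := by
      rw [Real.norm_eq_abs, abs_div, abs_of_pos hGn]
      congr 1
      rw [abs_mul, abs_mul, abs_mul, abs_pow, abs_pow, abs_neg, Nat.abs_cast, Nat.abs_cast,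
        abs_of_pos hX]
    rw [habs]
    have hd : (k.descFactorial r : ℝ) ≤ (r.factorial : ℝ) * 2 ^ k := by
      rw [Nat.descFactorial_eq_factorial_mul_choose]
      have := choose_le_two_pow k r
      push_cast
      exact mul_le_mul_of_nonneg_left (by exact_mod_cast this) (by positivity)
    have hch : (((k + j).choose j : ℕ) : ℝ) ≤ 2 ^ (k + j) := by
      have := choose_le_two_pow (k + j) j
      exact_mod_cast this
    have hgam : c * Aν ^ (k + j) ≤ Real.Gamma (ν * ((k + j : ℕ) : ℝ) + 1) := by
      have := hcle (k + j)
      rwa [hrpow_pow (k + j)] at this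
    have hden : 0 < c * Aν ^ (k + j) := by positivity
    calc ((k.descFactorial r : ℝ) * ((k + j).choose j : ℝ)) *
          (X ^ k * X ^ j) / Real.Gamma (ν * ((k + j : ℕ) : ℝ) + 1)
        ≤ (((r.factorial : ℝ) * 2 ^ k) * 2 ^ (k + j)) * (X ^ k * X ^ j) /
            (c * Aν ^ (k + j)) := by
          apply div_le_div₀ (by positivity)
          · apply mul_le_mul _ le_rfl (by positivity) (by positivity)
            exact mul_le_mul hd hch (by positivity) (by positivity)
          · exact hden
          · exact hgam
      _ = ((r.factorial : ℝ) / c) * (u ^ k * v ^ j) := by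
          rw [hudef, hvdef, div_pow, div_pow, pow_add, pow_add]
          field_simp
          ring_nf
          rw [show (2:ℝ) ^ (k * 2) = 4 ^ k by rw [pow_mul']; norm_num]
          ring
  have hbsum : Summable (fun p : ℕ × ℕ => ((r.factorial : ℝ) / c) * (u ^ p.1 * v ^ p.2)) := by
    apply Summable.mul_left
    exact (summable_geometric_of_lt_one hu0 hu1).mul_of_nonneg
      (summable_geometric_of_lt_one hv0 hv1) (fun n => by positivity) (fun n => by positivity)
  have hF : Summable F := Summable.of_norm_bounded hbsum hnorm
  -- rewrite LHS as double sum
  have step1 : ∑' k : ℕ, (∏ i ∈ Finset.range r, ((k : ℝ) - i)) *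
      (X ^ k * gml ν (ν * k + 1) (k + 1) (-X)) = ∑' k : ℕ, ∑' j : ℕ, F (k, j) := by
    apply tsum_congr
    intro k
    rw [gml, ← tsum_mul_left, ← tsum_mul_left]
  rw [step1]
  -- Fubini and regroup along antidiagonals
  have step2 : ∑' k : ℕ, ∑' j : ℕ, F (k, j) = ∑' p : ℕ × ℕ, F p :=
    (Summable.tsum_prod' hF fun k => hF.prod_factor k).symm
  rw [step2]
  have step3 : ∑' p : ℕ × ℕ, F p
      = ∑' n : ℕ, ∑ p ∈ Finset.HasAntidiagonal.antidiagonal n, F p := by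
    have e := Finset.HasAntidiagonal.sigmaAntidiagonalEquivProd (A := ℕ)
    calc ∑' p : ℕ × ℕ, F p
        = ∑' x : Σ n : ℕ, {p : ℕ × ℕ // p ∈ Finset.HasAntidiagonal.antidiagonal n},
            (F ∘ Finset.HasAntidiagonal.sigmaAntidiagonalEquivProd) x :=
          ((Finset.HasAntidiagonal.sigmaAntidiagonalEquivProd (A := ℕ)).tsum_eq F).symm
      _ = ∑' n : ℕ, ∑' p : {p : ℕ × ℕ // p ∈ Finset.HasAntidiagonal.antidiagonal n},
            (F ∘ Finset.HasAntidiagonal.sigmaAntidiagonalEquivProd) ⟨n, p⟩ :=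
          Summable.tsum_sigma' (fun n => (hasSum_fintype _).summable)
            ((Equiv.summable_iff _).2 hF)
      _ = ∑' n : ℕ, ∑ p ∈ Finset.HasAntidiagonal.antidiagonal n, F p := by
          apply tsum_congr
          intro n
          rw [tsum_fintype]
          exact Finset.sum_coe_sort (Finset.HasAntidiagonal.antidiagonal n) F
  rw [step3]
  -- evaluate each antidiagonal sum
  have step4 : ∀ n : ℕ, ∑ p ∈ Finset.HasAntidiagonal.antidiagonal n, F p
      = if n = r then X ^ r * (r.factorial : ℝ) / Real.Gamma (ν * r + 1) else 0 := by
    intro n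
    rw [Finset.Nat.sum_antidiagonal_eq_sum_range_succ_mk]
    have hterm : ∀ k ∈ Finset.range (n + 1), F (k, n - k)
        = ((-1 : ℝ) ^ (n - k) * (n.choose k) * (k.descFactorial r)) *
            (X ^ n / Real.Gamma (ν * n + 1)) := by
      intro k hk
      rw [Finset.mem_range, Nat.lt_succ_iff] at hk
      rw [hFeq]
      rw [Nat.add_sub_cancel' hk]
      rw [Nat.choose_symm hk]
      have : (-X) ^ (n - k) = (-1 : ℝ) ^ (n - k) * X ^ (n - k) := by
        rw [neg_pow]
      have hXn : X ^ k * X ^ (n - k) = X ^ n := by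
        rw [← pow_add, Nat.add_sub_cancel' hk]
      rw [this, ← hXn]
      ring
    rw [Finset.sum_congr rfl hterm, ← Finset.sum_mul, alt_sum_real]
    by_cases h : n = r
    · subst h; rw [if_pos rfl, if_pos rfl]; ring
    · rw [if_neg h, if_neg h, zero_mul]
  rw [tsum_congr step4, tsum_ite_eq]
end

section
/- For every ν ∈ (0,1], λ > 0, t > 0 and every u with 0 < u ≤ 1, the probability generating function of the second-type fractional Poisson distribution p̂_k^{ν}(t) = λ^{2k} t^{2kν} E_{ν, 2kν+1}^{2k+1}(-λ t^{ν}) + λ^{2k+1} t^{(2k+1)ν} E_{ν, (2k+1)ν+1}^{2k+2}(-λ t^{ν}) satisfies Σ_{k=0}^∞ u^{k} p̂_k^{ν}(t) = ((√u + 1)/(2√u)) · E_{ν,1}(-λ(1 - √u) t^{ν}) + ((√u - 1)/(2√u)) · E_{ν,1}(-λ(1 + √u) t^{ν}). -/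
open Real

open Filter

lemma gamma_ratio {ν x : ℝ} (hν : 0 < ν) (hν1 : ν ≤ 1) (hx : 1 ≤ x) :
    Real.Gamma x * ((x + ν) ^ ν / 2) ≤ Real.Gamma (x + ν) := by
  have hx0 : 0 < x := lt_of_lt_of_le one_pos hx
  have hxν : 0 < x + ν := by linarith
  have hΓx : 0 < Real.Gamma x := Real.Gamma_pos_of_pos hx0
  have hΓxν : 0 < Real.Gamma (x + ν) := Real.Gamma_pos_of_pos hxν
  have hΓxν1 : 0 < Real.Gamma (x + ν + 1) := Real.Gamma_pos_of_pos (by linarith)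
  have hconv := convexOn_log_Gamma.2 (Set.mem_Ioi.2 hxν) (Set.mem_Ioi.2 (by linarith : (0:ℝ) < x + ν + 1))
    hν.le (by linarith : (0:ℝ) ≤ 1 - ν) (by ring)
  have hcomb : ν • (x + ν) + (1 - ν) • (x + ν + 1) = x + 1 := by
    simp only [smul_eq_mul]; ring
  rw [hcomb] at hconv
  simp only [Function.comp, smul_eq_mul] at hconv
  have h1 : Real.log (Real.Gamma (x + 1)) = Real.log x + Real.log (Real.Gamma x) := by
    rw [Real.Gamma_add_one hx0.ne', Real.log_mul hx0.ne' hΓx.ne']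
  have h2 : Real.log (Real.Gamma (x + ν + 1)) = Real.log (x + ν) + Real.log (Real.Gamma (x + ν)) := by
    rw [Real.Gamma_add_one hxν.ne', Real.log_mul hxν.ne' hΓxν.ne']
  rw [h1, h2] at hconv
  -- hconv : log x + log Γ x ≤ ν * log Γ (x+ν) + (1-ν) * (log (x+ν) + log Γ (x+ν))
  have hkey : Real.log (Real.Gamma x) + (ν * Real.log (x + ν) - Real.log 2) ≤
      Real.log (Real.Gamma (x + ν)) := by
    have hlog : Real.log (x + ν) - Real.log x ≤ Real.log 2 := by
      rw [← Real.log_div hxν.ne' hx0.ne']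
      have h3 : (x + ν) / x ≤ 2 := by
        rw [div_le_iff₀ hx0]; linarith
      exact Real.log_le_log (by positivity) h3
    nlinarith [hconv, hlog]
  calc Real.Gamma x * ((x + ν) ^ ν / 2)
      = Real.exp (Real.log (Real.Gamma x) + (ν * Real.log (x + ν) - Real.log 2)) := by
        rw [Real.exp_add, Real.exp_log hΓx, Real.exp_sub, Real.exp_log two_pos,
          mul_comm ν (Real.log (x + ν)), ← Real.rpow_def_of_pos hxν]
    _ ≤ Real.exp (Real.log (Real.Gamma (x + ν))) := Real.exp_le_exp.2 hkey
    _ = Real.Gamma (x + ν) := Real.exp_log hΓxν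

lemma mlSummable {ν : ℝ} (hν : 0 < ν) (hν1 : ν ≤ 1) {y : ℝ} (hy : 0 ≤ y) :
    Summable (fun m : ℕ => y ^ m / Real.Gamma (ν * m + 1)) := by
  have hG : ∀ m : ℕ, 0 < Real.Gamma (ν * m + 1) := fun m =>
    Real.Gamma_pos_of_pos (by positivity)
  apply summable_of_ratio_norm_eventually_le (r := 1/2) (by norm_num)
  have htend : Tendsto (fun m : ℕ => (ν * m + 1 + ν) ^ (ν : ℝ)) atTop atTop := by
    apply (tendsto_rpow_atTop hν).comp
    apply tendsto_atTop_add_const_right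
    apply tendsto_atTop_add_const_right
    exact Tendsto.const_mul_atTop hν tendsto_natCast_atTop_atTop
  filter_upwards [htend.eventually_ge_atTop (4 * y + 1)] with m hm
  set x : ℝ := ν * m + 1 with hxdef
  have hx1 : 1 ≤ x := by
    have : (0:ℝ) ≤ ν * m := by positivity
    linarith
  have hxν : 0 < x + ν := by positivity
  have hratio := gamma_ratio hν hν1 hx1
  have hΓx := Real.Gamma_pos_of_pos (by positivity : (0:ℝ) < x)
  have hΓxν := Real.Gamma_pos_of_pos (hxν)
  have hP : (0:ℝ) < (x + ν) ^ ν := Real.rpow_pos_of_pos hxν ν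
  have heq : ν * (m + 1 : ℕ) + 1 = x + ν := by push_cast [hxdef]; ring
  rw [Real.norm_of_nonneg (by positivity), Real.norm_of_nonneg (by positivity), heq]
  have step1 : y ^ (m + 1) / Real.Gamma (x + ν) ≤ y ^ (m + 1) / (Real.Gamma x * ((x + ν) ^ ν / 2)) :=
    div_le_div_of_nonneg_left (by positivity) (by positivity) hratio
  refine step1.trans ?_
  have : y ^ (m + 1) / (Real.Gamma x * ((x + ν) ^ ν / 2)) =
      (y ^ m / Real.Gamma x) * (2 * y / (x + ν) ^ ν) := by
    field_simp
    ring
  rw [this]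
  have h2 : 2 * y / (x + ν) ^ ν ≤ 1 / 2 := by
    rw [div_le_iff₀ hP]
    have : (4:ℝ) * y + 1 ≤ (x + ν) ^ ν := hm
    linarith
  calc (y ^ m / Real.Gamma x) * (2 * y / (x + ν) ^ ν)
      ≤ (y ^ m / Real.Gamma x) * (1/2) := by
        apply mul_le_mul_of_nonneg_left h2 (by positivity)
    _ = 1/2 * (y ^ m / Real.Gamma x) := by ring

lemma prod_shift (n r : ℕ) :
    (∏ i ∈ Finset.range r, ((n : ℝ) + 1 + i)) * n.factorial = (n + r).factorial := by
  induction r with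
  | zero => simp
  | succ r ih =>
    rw [Finset.prod_range_succ, mul_right_comm, ih]
    have : n + (r + 1) = (n + r) + 1 := by ring
    rw [this, Nat.factorial_succ]
    push_cast
    ring

lemma term_eq (ν x z : ℝ) (hν : 0 < ν) (n r : ℕ) :
    (z ^ n * x ^ n) *
      ((∏ i ∈ Finset.range r, (((n : ℝ) + 1) + i)) * (-x) ^ r /
        (r.factorial * Real.Gamma (ν * r + ((n : ℝ) * ν + 1))))
      = ((n + r).choose n : ℝ) * (z ^ n * (-1) ^ r * x ^ (n + r)) /
        Real.Gamma (ν * (n + r : ℕ) + 1) := by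
  have hΓarg : ν * r + ((n : ℝ) * ν + 1) = ν * ((n : ℕ) + (r : ℕ) : ℕ) + 1 := by
    push_cast; ring
  rw [hΓarg]
  have hΓ : Real.Gamma (ν * ((n + r : ℕ) : ℝ) + 1) ≠ 0 :=
    (Real.Gamma_pos_of_pos (by positivity)).ne'
  have hchoose : ((n + r).choose n : ℝ) * n.factorial * r.factorial = (n + r).factorial := by
    have := Nat.choose_mul_factorial_mul_factorial (Nat.le_add_right n r)
    have h2 : n + r - n = r := by omega
    rw [h2] at this
    exact_mod_cast this
  have hprod := prod_shift n r
  have hnfac : (n.factorial : ℝ) ≠ 0 := by exact_mod_cast n.factorial_ne_zero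
  have hrfac : (r.factorial : ℝ) ≠ 0 := by exact_mod_cast r.factorial_ne_zero
  have hneg : (-x) ^ r = (-1) ^ r * x ^ r := by rw [neg_pow]
  have h1 : (∏ i ∈ Finset.range r, (((n : ℝ) + 1) + i)) = ((n + r).factorial : ℝ) / n.factorial := by
    rw [eq_div_iff hnfac]; exact prod_shift n r
  have h2 : ((n + r).choose n : ℝ) = ((n + r).factorial : ℝ) / (n.factorial * r.factorial) := by
    rw [eq_div_iff (mul_ne_zero hnfac hrfac)]
    calc ((n + r).choose n : ℝ) * ((n.factorial : ℝ) * r.factorial)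
        = ((n + r).choose n : ℝ) * n.factorial * r.factorial := by ring
      _ = _ := hchoose
  rw [hneg, pow_add, h1, h2]
  have hfacnr : ((n + r).factorial : ℝ) ≠ 0 := by exact_mod_cast (n + r).factorial_ne_zero
  field_simp


lemma antidiag_sum (n : ℕ) (w v : ℝ) :
    ∑ p ∈ Finset.HasAntidiagonal.antidiagonal n, (n.choose p.1 : ℝ) * (w ^ p.1 * v ^ p.2) = (w + v) ^ n := by
  rw [Finset.Nat.sum_antidiagonal_eq_sum_range_succ_mk, add_pow]
  refine Finset.sum_congr rfl fun k hk => by ring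

lemma key (ν x z : ℝ) (hν : 0 < ν) (hν1 : ν ≤ 1) (hx : 0 < x) (hz : |z| ≤ 1) :
    Summable (fun n : ℕ => z ^ n * (x ^ n * gml ν (n * ν + 1) (n + 1) (-x))) ∧
    ∑' n : ℕ, z ^ n * (x ^ n * gml ν (n * ν + 1) (n + 1) (-x)) = ml ν 1 (-(x * (1 - z))) := by
  have hGpos : ∀ m : ℕ, (0:ℝ) < Real.Gamma (ν * m + 1) := fun m =>
    Real.Gamma_pos_of_pos (by positivity)
  set f : ℕ × ℕ → ℝ := fun p => ((p.1 + p.2).choose p.1 : ℝ) *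
    (z ^ p.1 * (-1) ^ p.2 * x ^ (p.1 + p.2)) / Real.Gamma (ν * ((p.1 + p.2 : ℕ) : ℝ) + 1)
    with hfdef
  have habs : ∀ p : ℕ × ℕ, |f p| = ((p.1 + p.2).choose p.1 : ℝ) *
      (|z| ^ p.1 * x ^ (p.1 + p.2)) / Real.Gamma (ν * ((p.1 + p.2 : ℕ) : ℝ) + 1) := by
    intro p
    rw [hfdef, abs_div, abs_of_pos (hGpos _), abs_mul, abs_mul, abs_mul, abs_pow, abs_pow,
      abs_pow, abs_neg, abs_one, one_pow, Nat.abs_cast, abs_of_pos hx]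
    ring_nf
  -- fiber sums of |f|
  have hfib_abs : ∀ n : ℕ, ∑' (c : {q // q ∈ Finset.HasAntidiagonal.antidiagonal n}), |f ↑c|
      = ((|z| + 1) * x) ^ n / Real.Gamma (ν * n + 1) := by
    intro n
    rw [Finset.tsum_subtype (Finset.HasAntidiagonal.antidiagonal n) (fun p => |f p|)]
    have hc : ∀ p ∈ Finset.HasAntidiagonal.antidiagonal n, |f p| =
        ((n.choose p.1 : ℝ) * (|z| ^ p.1 * (1:ℝ) ^ p.2)) * (x ^ n / Real.Gamma (ν * n + 1)) := by
      intro p hp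
      rw [Finset.HasAntidiagonal.mem_antidiagonal] at hp
      rw [habs, hp, one_pow]
      ring
    rw [Finset.sum_congr rfl hc, ← Finset.sum_mul, antidiag_sum, mul_pow]
    rw [div_eq_mul_inv, div_eq_mul_inv, mul_assoc]
  -- fiber sums of f
  have hfib : ∀ n : ℕ, ∑' (c : {q // q ∈ Finset.HasAntidiagonal.antidiagonal n}), f ↑c
      = (x * (z + -1)) ^ n / Real.Gamma (ν * n + 1) := by
    intro n
    rw [Finset.tsum_subtype (Finset.HasAntidiagonal.antidiagonal n) (fun p => f p)]
    have hc : ∀ p ∈ Finset.HasAntidiagonal.antidiagonal n, f p =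
        ((n.choose p.1 : ℝ) * (z ^ p.1 * (-1:ℝ) ^ p.2)) * (x ^ n / Real.Gamma (ν * n + 1)) := by
      intro p hp
      rw [Finset.HasAntidiagonal.mem_antidiagonal] at hp
      simp only [hfdef, hp]
      ring
    rw [Finset.sum_congr rfl hc, ← Finset.sum_mul, antidiag_sum, mul_pow]
    rw [div_eq_mul_inv, div_eq_mul_inv]
    ring
  -- summability of |f|
  have hFs : Summable (fun p => |f p|) := by
    have hσ : Summable (fun σ : (Σ n : ℕ, {q // q ∈ Finset.HasAntidiagonal.antidiagonal n}) => |f ↑σ.2|) := by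
      refine (summable_sigma_of_nonneg (fun _ => abs_nonneg _)).mpr ⟨fun n => .of_finite, ?_⟩
      refine Summable.congr (mlSummable hν hν1 (y := (|z| + 1) * x) (by positivity)) ?_
      intro n
      exact (hfib_abs n).symm
    exact (Finset.HasAntidiagonal.sigmaAntidiagonalEquivProd (A := ℕ)).summable_iff.mp hσ
  have hf : Summable f := summable_abs_iff.mp hFs
  have hfσ : Summable (fun σ : (Σ n : ℕ, {q // q ∈ Finset.HasAntidiagonal.antidiagonal n}) => f ↑σ.2) :=
    (Finset.HasAntidiagonal.sigmaAntidiagonalEquivProd (A := ℕ)).summable_iff.mpr hf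
  -- tsum over pairs equals ml
  have hsum1 : ∑' p, f p = ml ν 1 (-(x * (1 - z))) := by
    have e1 : ∑' p, f p = ∑' σ : (Σ n : ℕ, {q // q ∈ Finset.HasAntidiagonal.antidiagonal n}), f ↑σ.2 :=
      ((Finset.HasAntidiagonal.sigmaAntidiagonalEquivProd (A := ℕ)).tsum_eq f).symm
    rw [e1, Summable.tsum_sigma' (fun n => .of_finite) hfσ, ml]
    refine tsum_congr fun n => ?_
    rw [hfib n]
    congr 2
    ring
  -- rows
  have hrow : ∀ n : ℕ, ∑' r, f (n, r) = z ^ n * (x ^ n * gml ν (n * ν + 1) (n + 1) (-x)) := by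
    intro n
    calc ∑' r, f (n, r)
        = ∑' r : ℕ, (z ^ n * x ^ n) *
            ((∏ i ∈ Finset.range r, (((n : ℝ) + 1) + i)) * (-x) ^ r /
              (r.factorial * Real.Gamma (ν * r + ((n : ℝ) * ν + 1)))) :=
          tsum_congr fun r => (term_eq ν x z hν n r).symm
      _ = (z ^ n * x ^ n) * ∑' r : ℕ, ((∏ i ∈ Finset.range r, (((n : ℝ) + 1) + i)) * (-x) ^ r /
              (r.factorial * Real.Gamma (ν * r + ((n : ℝ) * ν + 1)))) := tsum_mul_left
      _ = z ^ n * (x ^ n * gml ν (n * ν + 1) (n + 1) (-x)) := by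
          rw [gml, mul_assoc]
  have hsum2 : ∑' p, f p = ∑' n : ℕ, z ^ n * (x ^ n * gml ν (n * ν + 1) (n + 1) (-x)) := by
    rw [Summable.tsum_prod' hf (fun n => hf.prod_factor n)]
    exact tsum_congr hrow
  constructor
  · have h := hf.prod
    exact h.congr hrow
  · rw [← hsum2, hsum1]

/-- Probability generating function of the second-type fractional Poisson distribution:
for `ν ∈ (0,1]`, `λ > 0`, `t > 0`, `0 < u ≤ 1`,
`Σ_{k=0}^∞ u^k p̂_k^ν(t) = ((√u+1)/(2√u)) E_{ν,1}(-λ(1-√u)t^ν)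
  + ((√u-1)/(2√u)) E_{ν,1}(-λ(1+√u)t^ν)`, where
`p̂_k^ν(t) = λ^{2k} t^{2kν} E_{ν,2kν+1}^{2k+1}(-λt^ν)
  + λ^{2k+1} t^{(2k+1)ν} E_{ν,(2k+1)ν+1}^{2k+2}(-λt^ν)`. -/
theorem second_type_pgf (ν lam t u : ℝ) (hν : 0 < ν) (hν1 : ν ≤ 1)
    (hlam : 0 < lam) (ht : 0 < t) (hu : 0 < u) (hu1 : u ≤ 1) :
    ∑' k : ℕ, u ^ k *
        (lam ^ (2 * k) * t ^ ((2 * k : ℕ) * ν) *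
            gml ν (2 * k * ν + 1) (2 * k + 1) (-(lam * t ^ ν))
          + lam ^ (2 * k + 1) * t ^ ((2 * k + 1 : ℕ) * ν) *
            gml ν ((2 * k + 1) * ν + 1) (2 * k + 2) (-(lam * t ^ ν)))
      = (Real.sqrt u + 1) / (2 * Real.sqrt u) *
          ml ν 1 (-(lam * (1 - Real.sqrt u) * t ^ ν))
        + (Real.sqrt u - 1) / (2 * Real.sqrt u) *
          ml ν 1 (-(lam * (1 + Real.sqrt u) * t ^ ν)) := by
  have htν : 0 < t ^ ν := Real.rpow_pos_of_pos ht ν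
  set x := lam * t ^ ν with hxdef
  have hx : 0 < x := by positivity
  set s := Real.sqrt u with hsdef
  have hs : 0 < s := Real.sqrt_pos.mpr hu
  have hs1 : s ≤ 1 := by
    rw [hsdef, show (1:ℝ) = Real.sqrt 1 by simp]
    exact Real.sqrt_le_sqrt hu1
  have hs2 : s ^ 2 = u := Real.sq_sqrt hu.le
  obtain ⟨hsumP, heqP⟩ := key ν x s hν hν1 hx (by rw [abs_of_pos hs]; exact hs1)
  obtain ⟨hsumM, heqM⟩ := key ν x (-s) hν hν1 hx (by rw [abs_neg, abs_of_pos hs]; exact hs1)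
  set a : ℕ → ℝ := fun n => x ^ n * gml ν (n * ν + 1) (n + 1) (-x) with hadef
  set g : ℕ → ℝ := fun n =>
    (s + 1) / (2 * s) * (s ^ n * a n) + (s - 1) / (2 * s) * ((-s) ^ n * a n) with hgdef
  have hgs : Summable g := (hsumP.mul_left _).add (hsumM.mul_left _)
  have hpow : ∀ m : ℕ, lam ^ m * t ^ ((m : ℝ) * ν) = x ^ m := by
    intro m
    rw [mul_comm (m : ℝ) ν, Real.rpow_mul ht.le, Real.rpow_natCast, hxdef, mul_pow]
  have c1 : ∀ k : ℕ, a (2 * k) = x ^ (2 * k) *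
      gml ν (2 * k * ν + 1) (2 * k + 1) (-x) := by
    intro k
    simp only [hadef]
    push_cast
    ring_nf
  have c2 : ∀ k : ℕ, a (2 * k + 1) = x ^ (2 * k + 1) *
      gml ν ((2 * k + 1) * ν + 1) (2 * k + 2) (-x) := by
    intro k
    simp only [hadef]
    push_cast
    ring_nf
  have hT : ∀ k : ℕ, u ^ k *
      (lam ^ (2 * k) * t ^ (((2 * k : ℕ) : ℝ) * ν) *
          gml ν (2 * k * ν + 1) (2 * k + 1) (-x)
        + lam ^ (2 * k + 1) * t ^ (((2 * k + 1 : ℕ) : ℝ) * ν) *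
          gml ν ((2 * k + 1) * ν + 1) (2 * k + 2) (-x))
      = g (2 * k) + g (2 * k + 1) := by
    intro k
    have hu2 : u ^ k = s ^ (2 * k) := by rw [pow_mul, hs2]
    have hne : (-s) ^ (2 * k) = s ^ (2 * k) := by rw [pow_mul, pow_mul, neg_sq]
    have hno : (-s) ^ (2 * k + 1) = -s ^ (2 * k + 1) := by
      rw [pow_succ, pow_succ, hne]; ring
    rw [hpow (2 * k), hpow (2 * k + 1), ← c1 k, ← c2 k]
    simp only [hgdef]
    rw [hne, hno, hu2]
    field_simp
    ring
  have hge : Summable fun k => g (2 * k) :=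
    hgs.comp_injective fun p q h => by omega
  have hgo : Summable fun k => g (2 * k + 1) :=
    hgs.comp_injective fun p q h => by omega
  calc ∑' k : ℕ, u ^ k *
        (lam ^ (2 * k) * t ^ (((2 * k : ℕ) : ℝ) * ν) *
            gml ν (2 * k * ν + 1) (2 * k + 1) (-x)
          + lam ^ (2 * k + 1) * t ^ (((2 * k + 1 : ℕ) : ℝ) * ν) *
            gml ν ((2 * k + 1) * ν + 1) (2 * k + 2) (-x))
      = ∑' k : ℕ, (g (2 * k) + g (2 * k + 1)) := tsum_congr hT
    _ = (∑' k : ℕ, g (2 * k)) + ∑' k : ℕ, g (2 * k + 1) := Summable.tsum_add hge hgo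
    _ = ∑' n : ℕ, g n := tsum_even_add_odd hge hgo
    _ = (s + 1) / (2 * s) * (∑' n : ℕ, s ^ n * (x ^ n * gml ν (n * ν + 1) (n + 1) (-x)))
        + (s - 1) / (2 * s) * (∑' n : ℕ, (-s) ^ n * (x ^ n * gml ν (n * ν + 1) (n + 1) (-x))) := by
        simp only [hgdef, hadef]
        rw [Summable.tsum_add (hsumP.mul_left _) (hsumM.mul_left _), tsum_mul_left, tsum_mul_left]
    _ = (s + 1) / (2 * s) * ml ν 1 (-(lam * (1 - s) * t ^ ν))
        + (s - 1) / (2 * s) * ml ν 1 (-(lam * (1 + s) * t ^ ν)) := by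
        rw [heqP, heqM,
          show -(x * (1 - s)) = -(lam * (1 - s) * t ^ ν) by rw [hxdef]; ring,
          show -(x * (1 - -s)) = -(lam * (1 + s) * t ^ ν) by rw [hxdef]; ring]
end

section
/- For every ν ∈ (0,1], λ > 0 and t > 0, the convolution of the Mittag-Leffler interarrival density with itself satisfies ∫₀^{t} λ s^{ν-1} E_{ν,ν}(-λ s^{ν}) · λ (t-s)^{ν-1} E_{ν,ν}(-λ (t-s)^{ν}) ds = λ² t^{2ν-1} E_{ν, 2ν}^{2}(-λ t^{ν}). -/
open Real MeasureTheory

section Aux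

open Filter Set intervalIntegral

lemma gamma_interp {ν y : ℝ} (hν : 0 < ν) (hν1 : ν ≤ 1) (hy : 0 < y)
    (hy1 : 0 < y + ν - 1) : Gamma y * (y + ν - 1) ^ ν ≤ Gamma (y + ν) := by
  rcases eq_or_lt_of_le hν1 with h1 | h1
  · subst h1
    rw [Real.Gamma_add_one hy.ne', Real.rpow_one]
    have : y + 1 - 1 = y := by ring
    rw [this, mul_comm]
  · have h2 : (0:ℝ) < 1 - ν := by linarith
    have key := Real.Gamma_mul_add_mul_le_rpow_Gamma_mul_rpow_Gamma hy1
      (by linarith : (0:ℝ) < y + ν) hν h2 (by ring)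
    have harg : ν * (y + ν - 1) + (1 - ν) * (y + ν) = y := by ring
    rw [harg] at key
    have hG : Gamma (y + ν - 1) = Gamma (y + ν) / (y + ν - 1) := by
      have h4 := Real.Gamma_add_one hy1.ne'
      have h3 : y + ν - 1 + 1 = y + ν := by ring
      rw [h3] at h4
      field_simp [h4]
      linarith [h4]
    rw [hG] at key
    have hGp : 0 < Gamma (y + ν) := Real.Gamma_pos_of_pos (by linarith)
    rw [Real.div_rpow hGp.le hy1.le] at key
    have heq : Gamma (y + ν) ^ ν / (y + ν - 1) ^ ν * Gamma (y + ν) ^ (1 - ν)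
        = Gamma (y + ν) / (y + ν - 1) ^ ν := by
      rw [div_mul_eq_mul_div, ← Real.rpow_add hGp]
      norm_num
    rw [heq] at key
    have hp : 0 < (y + ν - 1) ^ ν := Real.rpow_pos_of_pos hy1 _
    calc Gamma y * (y + ν - 1) ^ ν ≤ Gamma (y + ν) / (y + ν - 1) ^ ν * (y + ν - 1) ^ ν :=
          mul_le_mul_of_nonneg_right key hp.le
      _ = Gamma (y + ν) := by field_simp

lemma summable_master {ν c : ℝ} (x : ℝ) (hν : 0 < ν) (hν1 : ν ≤ 1) (hc : 0 < c) :
    Summable (fun r : ℕ => ((r:ℝ)+1) * |x| ^ r / Gamma (ν*r + c)) := by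
  apply summable_of_ratio_norm_eventually_le (r := 1/2) (by norm_num)
  have htend : Tendsto (fun n : ℕ => (ν * n + c + ν - 1) ^ ν) atTop atTop := by
    have h0 : Tendsto (fun n : ℕ => ν * (n:ℝ) + (c + ν - 1)) atTop atTop :=
      tendsto_atTop_add_const_right _ _ ((tendsto_natCast_atTop_atTop).const_mul_atTop hν)
    exact (tendsto_rpow_atTop hν).comp (h0.congr (by intro n; ring))
  filter_upwards [htend.eventually_ge_atTop (4 * |x| + 1),
    eventually_ge_atTop (Nat.ceil ((1 - c) / ν))] with n hn hn2
  have hyc : (0:ℝ) < ν * n + c := by positivity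
  have hy1 : 0 < ν * n + c + ν - 1 := by
    have h5 : (1 - c)/ν ≤ (n:ℝ) := le_trans (Nat.le_ceil _) (by exact_mod_cast hn2)
    rw [div_le_iff₀ hν] at h5
    nlinarith
  have hGpos : 0 < Gamma (ν*n + c) := Real.Gamma_pos_of_pos hyc
  have hGpos' : 0 < Gamma (ν*((n:ℝ)+1) + c) := Real.Gamma_pos_of_pos (by positivity)
  have hkey := gamma_interp hν hν1 hyc hy1
  have harg : ν * (n:ℝ) + c + ν = ν * ((n:ℝ)+1) + c := by ring
  rw [harg] at hkey
  have hGbig : Gamma (ν*(n:ℝ)+c) * (4*|x|+1) ≤ Gamma (ν*((n:ℝ)+1)+c) := by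
    refine le_trans ?_ hkey
    have hn' : 4*|x|+1 ≤ (ν*((n:ℝ)+1)+c-1)^ν := by
      rw [show ν*((n:ℝ)+1)+c-1 = ν*(n:ℝ)+c+ν-1 by ring]; exact hn
    exact mul_le_mul_of_nonneg_left hn' hGpos.le
  have hnn : ∀ m : ℕ, 0 ≤ ((m:ℝ)+1) * |x| ^ m / Gamma (ν*m + c) := by
    intro m
    have := Real.Gamma_pos_of_pos (show (0:ℝ) < ν*m + c by positivity)
    positivity
  rw [Real.norm_of_nonneg (hnn (n+1)), Real.norm_of_nonneg (hnn n)]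
  push_cast
  rw [← mul_div_assoc, div_le_div_iff₀ hGpos' hGpos]
  calc ((n:ℝ)+1+1)*|x|^(n+1)*Gamma (ν*(n:ℝ)+c)
      = (((n:ℝ)+2)*|x|) * (|x|^n * Gamma (ν*(n:ℝ)+c)) := by rw [pow_succ]; ring
    _ ≤ ((1/2)*((n:ℝ)+1)*(4*|x|+1)) * (|x|^n * Gamma (ν*(n:ℝ)+c)) := by
        refine mul_le_mul_of_nonneg_right ?_ (by positivity)
        nlinarith [abs_nonneg x, Nat.cast_nonneg (α := ℝ) n]
    _ = 1/2*(((n:ℝ)+1)*|x|^n) * (Gamma (ν*(n:ℝ)+c)*(4*|x|+1)) := by ring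
    _ ≤ 1/2*(((n:ℝ)+1)*|x|^n) * Gamma (ν*((n:ℝ)+1)+c) :=
        mul_le_mul_of_nonneg_left hGbig (by positivity)

lemma summable_noweight {ν c : ℝ} (x : ℝ) (hν : 0 < ν) (hν1 : ν ≤ 1) (hc : 0 < c) :
    Summable (fun r : ℕ => |x| ^ r / Gamma (ν*r + c)) := by
  refine (summable_master x hν hν1 hc).of_nonneg_of_le (fun r => ?_) (fun r => ?_)
  · have := Real.Gamma_pos_of_pos (show (0:ℝ) < ν*r + c by positivity)
    positivity
  · have hG := Real.Gamma_pos_of_pos (show (0:ℝ) < ν*r + c by positivity)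
    gcongr
    nlinarith [pow_nonneg (abs_nonneg x) r, Nat.cast_nonneg (α := ℝ) r]

lemma beta_ii_left {a t : ℝ} (b : ℝ) (ha : 0 < a) (ht : 0 < t) :
    IntervalIntegrable (fun s : ℝ => s^(a-1) * (t-s)^(b-1)) volume 0 (t/2) := by
  apply IntervalIntegrable.mul_continuousOn
  · exact intervalIntegral.intervalIntegrable_rpow' (by linarith)
  · intro x hx
    rw [uIcc_of_le (by positivity : (0:ℝ) ≤ t/2)] at hx
    have hx2 : t - x ≠ 0 := by
      have := hx.2; intro h; nlinarith
    exact ((Real.continuousAt_rpow_const _ _ (Or.inl hx2)).comp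
      (by fun_prop : ContinuousAt (fun s : ℝ => t - s) x)).continuousWithinAt

lemma beta_ii {a b t : ℝ} (ha : 0 < a) (hb : 0 < b) (ht : 0 < t) :
    IntervalIntegrable (fun s : ℝ => s^(a-1) * (t-s)^(b-1)) volume 0 t := by
  refine (beta_ii_left b ha ht).trans ?_
  have h2 := (beta_ii_left a hb ht).comp_sub_left t
  simp only [sub_sub_cancel, sub_zero] at h2
  rw [show t - t/2 = t/2 by ring] at h2
  have h3 : (fun x : ℝ => (t-x)^(b-1) * x^(a-1)) = (fun x : ℝ => x^(a-1)*(t-x)^(b-1)) := by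
    funext x; ring
  rw [h3] at h2
  exact h2.symm

lemma beta_value {a b t : ℝ} (ha : 0 < a) (hb : 0 < b) (ht : 0 < t) :
    ∫ s in (0:ℝ)..t, s^(a-1) * (t-s)^(b-1)
      = Gamma a * Gamma b / Gamma (a+b) * t^(a+b-1) := by
  have hC : ((∫ s in (0:ℝ)..t, s^(a-1) * (t-s)^(b-1) : ℝ) : ℂ)
      = (t:ℂ)^((a:ℂ)+(b:ℂ)-1) * Complex.betaIntegral a b := by
    rw [← intervalIntegral.integral_ofReal, ← Complex.betaIntegral_scaled a b ht]
    refine intervalIntegral.integral_congr (fun s hs => ?_)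
    rw [uIcc_of_le ht.le] at hs
    rw [Complex.ofReal_mul, Complex.ofReal_cpow hs.1,
      Complex.ofReal_cpow (by linarith [hs.2] : (0:ℝ) ≤ t - s)]
    push_cast
    ring
  have hB : Complex.betaIntegral a b
      = Complex.Gamma a * Complex.Gamma b / Complex.Gamma (a+b) := by
    have h := Complex.Gamma_mul_Gamma_eq_betaIntegral
      (by simpa using ha : 0 < (a:ℂ).re) (by simpa using hb : 0 < (b:ℂ).re)
    have hne : Complex.Gamma ((a:ℂ)+(b:ℂ)) ≠ 0 := by
      rw [show ((a:ℂ)+(b:ℂ)) = ((a+b:ℝ):ℂ) by push_cast; ring, Complex.Gamma_ofReal]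
      exact_mod_cast (Real.Gamma_pos_of_pos (by linarith)).ne'
    field_simp at h ⊢
    rw [h]
  rw [hB] at hC
  have h1 : ((t:ℝ):ℂ)^((a:ℂ)+(b:ℂ)-1) = ((t^(a+b-1) : ℝ) : ℂ) := by
    rw [Complex.ofReal_cpow ht.le]; push_cast; ring_nf
  rw [h1, show ((a:ℂ)+(b:ℂ)) = ((a+b:ℝ):ℂ) by push_cast; ring] at hC
  rw [Complex.Gamma_ofReal, Complex.Gamma_ofReal, Complex.Gamma_ofReal] at hC
  have h6 := hC
  rw [show ((t^(a+b-1):ℝ):ℂ) * ((Gamma a : ℂ) * (Gamma b : ℂ) / (Gamma (a+b) : ℂ))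
    = (((t^(a+b-1) * (Gamma a * Gamma b / Gamma (a+b))) : ℝ) : ℂ) by push_cast; ring] at h6
  have h2 := Complex.ofReal_injective h6
  rw [h2]; ring

lemma tsum_antidiag_fiber (h : ℕ → ℝ) (n : ℕ) :
    ∑' (y : {x // x ∈ Finset.HasAntidiagonal.antidiagonal n}), h (y.1.1 + y.1.2) = ((n:ℝ)+1) * h n := by
  rw [Finset.tsum_subtype (Finset.HasAntidiagonal.antidiagonal n) (fun p => h (p.1 + p.2))]
  have h1 : ∑ p ∈ Finset.HasAntidiagonal.antidiagonal n, h (p.1 + p.2) = ∑ _p ∈ Finset.HasAntidiagonal.antidiagonal n, h n := by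
    refine Finset.sum_congr rfl (fun p hp => ?_)
    rw [Finset.HasAntidiagonal.mem_antidiagonal] at hp
    rw [hp]
  rw [h1, Finset.sum_const, Finset.Nat.card_antidiagonal, nsmul_eq_mul]
  push_cast; ring

lemma summable_diag {h : ℕ → ℝ} (h0 : ∀ r, 0 ≤ h r)
    (hs : Summable fun r : ℕ => ((r:ℝ)+1) * h r) :
    Summable (fun p : ℕ × ℕ => h (p.1 + p.2)) := by
  rw [← (Finset.HasAntidiagonal.sigmaAntidiagonalEquivProd (A := ℕ)).summable_iff]
  have heq : ((fun p : ℕ × ℕ => h (p.1 + p.2)) ∘ Finset.HasAntidiagonal.sigmaAntidiagonalEquivProd)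
      = fun y : (Σ n : ℕ, {x // x ∈ Finset.HasAntidiagonal.antidiagonal n}) => h (y.2.1.1 + y.2.1.2) := rfl
  rw [heq, summable_sigma_of_nonneg (fun _ => h0 _)]
  constructor
  · intro n; exact Summable.of_finite
  · apply Summable.congr hs
    intro n
    exact (tsum_antidiag_fiber h n).symm

lemma summable_diag' {h : ℕ → ℝ} (habs : Summable fun r : ℕ => ((r:ℝ)+1) * |h r|) :
    Summable (fun p : ℕ × ℕ => h (p.1 + p.2)) := by
  rw [← summable_abs_iff]
  exact summable_diag (fun r => abs_nonneg _) habs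

lemma tsum_diag' {h : ℕ → ℝ} (habs : Summable fun r : ℕ => ((r:ℝ)+1) * |h r|) :
    ∑' p : ℕ × ℕ, h (p.1 + p.2) = ∑' r : ℕ, ((r:ℝ)+1) * h r := by
  rw [← (Finset.HasAntidiagonal.sigmaAntidiagonalEquivProd (A := ℕ)).tsum_eq (fun p : ℕ×ℕ => h (p.1+p.2))]
  rw [Summable.tsum_sigma]
  · exact tsum_congr (fun n => tsum_antidiag_fiber h n)
  · exact (Equiv.summable_iff _).mpr (summable_diag' habs)

noncomputable def cf (ν lam : ℝ) (k : ℕ) : ℝ := lam * (-lam)^k / Real.Gamma (ν*k+ν)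

lemma density_series {ν lam s : ℝ} (hs : 0 < s) :
    lam * s^(ν-1) * ml ν ν (-(lam * s^ν)) = ∑' m : ℕ, cf ν lam m * s^(ν*(m:ℝ)+ν-1) := by
  rw [ml, ← tsum_mul_left]
  refine tsum_congr fun m => ?_
  have e2 : (s^ν)^m = s^(ν*(m:ℝ)) := by
    rw [← Real.rpow_natCast (s^ν) m, ← Real.rpow_mul hs.le]
  have e1 : s^(ν*(m:ℝ)+ν-1) = s^(ν*(m:ℝ)) * s^(ν-1) := by
    rw [show ν*(m:ℝ)+ν-1 = ν*(m:ℝ)+(ν-1) by ring, Real.rpow_add hs]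
  rw [cf, e1, ← e2, show -(lam * s^ν) = (-lam) * s^ν by ring, mul_pow]
  ring

lemma coeff_summable {ν lam s : ℝ} (hν : 0 < ν) (hν1 : ν ≤ 1) (hlam : 0 < lam) (hs : 0 < s) :
    Summable fun m : ℕ => ‖cf ν lam m * s^(ν*(m:ℝ)+ν-1)‖ := by
  have base := (summable_noweight (lam * s^ν) hν hν1 hν).mul_left (lam * s^(ν-1))
  refine base.congr fun m => ?_
  have hΓ : 0 < Real.Gamma (ν*(m:ℝ)+ν) := Real.Gamma_pos_of_pos (by positivity)
  have e2 : (s^ν)^m = s^(ν*(m:ℝ)) := by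
    rw [← Real.rpow_natCast (s^ν) m, ← Real.rpow_mul hs.le]
  have e1 : s^(ν*(m:ℝ)+ν-1) = s^(ν*(m:ℝ)) * s^(ν-1) := by
    rw [show ν*(m:ℝ)+ν-1 = ν*(m:ℝ)+(ν-1) by ring, Real.rpow_add hs]
  rw [Real.norm_eq_abs, cf]
  simp only [abs_mul, abs_div, abs_pow, abs_neg]
  rw [abs_of_pos hlam, abs_of_pos hΓ,
    abs_of_pos (Real.rpow_pos_of_pos hs (ν*(m:ℝ)+ν-1)), abs_of_pos (Real.rpow_pos_of_pos hs ν),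
    e1, ← e2]
  ring

lemma prod_two_add (r : ℕ) :
    (∏ i ∈ Finset.range r, ((2:ℝ) + (i:ℕ))) = ((r+1).factorial : ℝ) := by
  induction r with
  | zero => simp
  | succ n ih =>
    rw [Finset.prod_range_succ, ih, Nat.factorial_succ (n+1)]
    push_cast
    ring

lemma integral_Ioo_beta {a b t : ℝ} (ha : 0 < a) (hb : 0 < b) (ht : 0 < t) (C : ℝ) :
    ∫ s in Set.Ioo (0:ℝ) t, C * (s^(a-1) * (t-s)^(b-1))
      = C * (Gamma a * Gamma b / Gamma (a+b) * t^(a+b-1)) := by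
  rw [← integral_Ioc_eq_integral_Ioo, ← intervalIntegral.integral_of_le ht.le,
    intervalIntegral.integral_const_mul, beta_value ha hb ht]

lemma integrable_Ioo_beta {a b t : ℝ} (ha : 0 < a) (hb : 0 < b) (ht : 0 < t) (C : ℝ) :
    Integrable (fun s => C * (s^(a-1) * (t-s)^(b-1))) (volume.restrict (Set.Ioo (0:ℝ) t)) :=
  (((beta_ii ha hb ht).1).mono_set Set.Ioo_subset_Ioc_self).const_mul C

noncomputable def Gfun (ν lam t : ℝ) (p : ℕ × ℕ) (s : ℝ) : ℝ :=
  (cf ν lam p.1 * s^(ν*(p.1:ℝ)+ν-1)) * (cf ν lam p.2 * (t-s)^(ν*(p.2:ℝ)+ν-1))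

noncomputable def Phi (ν lam t : ℝ) (r : ℕ) : ℝ :=
  lam^2 * (-lam)^r * t^(ν*(r:ℝ)+2*ν-1) / Real.Gamma (ν*(r:ℝ)+2*ν)

lemma Gfun_rearrange (ν lam t : ℝ) (p : ℕ × ℕ) :
    Gfun ν lam t p = fun s => (cf ν lam p.1 * cf ν lam p.2) *
      (s^(ν*(p.1:ℝ)+ν-1) * (t-s)^(ν*(p.2:ℝ)+ν-1)) := by
  funext s; rw [Gfun]; ring

lemma Gfun_integrable {ν lam t : ℝ} (hν : 0 < ν) (ht : 0 < t) (p : ℕ × ℕ) :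
    Integrable (Gfun ν lam t p) (volume.restrict (Set.Ioo (0:ℝ) t)) := by
  rw [Gfun_rearrange]
  exact integrable_Ioo_beta (a := ν*(p.1:ℝ)+ν) (b := ν*(p.2:ℝ)+ν)
    (by positivity) (by positivity) ht _

lemma Gfun_integral {ν lam t : ℝ} (hν : 0 < ν) (hlam : 0 < lam) (ht : 0 < t) (p : ℕ × ℕ) :
    ∫ s in Set.Ioo (0:ℝ) t, Gfun ν lam t p s = Phi ν lam t (p.1 + p.2) := by
  rw [show (fun s => Gfun ν lam t p s) = Gfun ν lam t p from rfl, Gfun_rearrange]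
  rw [integral_Ioo_beta (by positivity) (by positivity) ht]
  have hΓ1 : 0 < Real.Gamma (ν*(p.1:ℝ)+ν) := Real.Gamma_pos_of_pos (by positivity)
  have hΓ2 : 0 < Real.Gamma (ν*(p.2:ℝ)+ν) := Real.Gamma_pos_of_pos (by positivity)
  rw [show ν*(p.1:ℝ)+ν+(ν*(p.2:ℝ)+ν) = ν*((p.1+p.2 : ℕ):ℝ)+2*ν by push_cast; ring]
  rw [Phi, cf, cf, pow_add]
  field_simp

lemma Gfun_norm_integral {ν lam t : ℝ} (hν : 0 < ν) (hlam : 0 < lam) (ht : 0 < t) (p : ℕ × ℕ) :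
    ∫ s in Set.Ioo (0:ℝ) t, ‖Gfun ν lam t p s‖
      = lam^2 * lam^(p.1+p.2) * t^(ν*((p.1+p.2 : ℕ):ℝ)+2*ν-1)
        / Real.Gamma (ν*((p.1+p.2 : ℕ):ℝ)+2*ν) := by
  have hΓ1 : 0 < Real.Gamma (ν*(p.1:ℝ)+ν) := Real.Gamma_pos_of_pos (by positivity)
  have hΓ2 : 0 < Real.Gamma (ν*(p.2:ℝ)+ν) := Real.Gamma_pos_of_pos (by positivity)
  have hcongr : ∀ s ∈ Set.Ioo (0:ℝ) t, ‖Gfun ν lam t p s‖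
      = (|cf ν lam p.1| * |cf ν lam p.2|) *
        (s^(ν*(p.1:ℝ)+ν-1) * (t-s)^(ν*(p.2:ℝ)+ν-1)) := by
    intro s hs
    rw [Real.norm_eq_abs, Gfun, abs_mul, abs_mul, abs_mul,
      abs_of_nonneg (Real.rpow_nonneg hs.1.le _),
      abs_of_nonneg (Real.rpow_nonneg (by linarith [hs.2] : (0:ℝ) ≤ t - s) _)]
    ring
  rw [setIntegral_congr_fun measurableSet_Ioo hcongr,
    integral_Ioo_beta (by positivity) (by positivity) ht,
    show ν*(p.1:ℝ)+ν+(ν*(p.2:ℝ)+ν) = ν*((p.1+p.2 : ℕ):ℝ)+2*ν by push_cast; ring]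
  have habs : ∀ k : ℕ, |cf ν lam k| = lam * lam^k / Real.Gamma (ν*(k:ℝ)+ν) := by
    intro k
    have hΓ : 0 < Real.Gamma (ν*(k:ℝ)+ν) := Real.Gamma_pos_of_pos (by positivity)
    rw [cf, abs_div, abs_mul, abs_pow, abs_neg, abs_of_pos hlam, abs_of_pos hΓ]
  rw [habs, habs, pow_add]
  field_simp

lemma summable_weighted {ν lam t : ℝ} (hν : 0 < ν) (hν1 : ν ≤ 1) (hlam : 0 < lam)
    (ht : 0 < t) :
    Summable fun r : ℕ => ((r:ℝ)+1) *
      (lam^2 * lam^r * t^(ν*(r:ℝ)+2*ν-1) / Real.Gamma (ν*(r:ℝ)+2*ν)) := by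
  have base := (summable_master (lam * t^ν) hν hν1
    (by positivity : (0:ℝ) < 2*ν)).mul_left (lam^2 * t^(2*ν-1))
  refine base.congr fun r => ?_
  have e2 : (t^ν)^r = t^(ν*(r:ℝ)) := by
    rw [← Real.rpow_natCast (t^ν) r, ← Real.rpow_mul ht.le]
  have e1 : t^(ν*(r:ℝ)+2*ν-1) = t^(ν*(r:ℝ)) * t^(2*ν-1) := by
    rw [show ν*(r:ℝ)+2*ν-1 = ν*(r:ℝ)+(2*ν-1) by ring, Real.rpow_add ht]
  rw [abs_of_nonneg (show (0:ℝ) ≤ lam * t^ν by positivity), mul_pow, e1, ← e2]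
  ring

end Aux

/-- Convolution of the Mittag-Leffler interarrival density with itself:
`∫₀^t λ s^{ν-1}E_{ν,ν}(-λs^ν) · λ(t-s)^{ν-1}E_{ν,ν}(-λ(t-s)^ν) ds
  = λ² t^{2ν-1} E_{ν,2ν}^2(-λt^ν)`. -/
theorem ml_density_self_convolution (ν lam t : ℝ) (hν : 0 < ν) (hν1 : ν ≤ 1)
    (hlam : 0 < lam) (ht : 0 < t) :
    ∫ s in (0 : ℝ)..t,
        (lam * s ^ (ν - 1) * ml ν ν (-(lam * s ^ ν))) *
          (lam * (t - s) ^ (ν - 1) * ml ν ν (-(lam * (t - s) ^ ν)))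
      = lam ^ 2 * t ^ (2 * ν - 1) * gml ν (2 * ν) 2 (-(lam * t ^ ν)) := by
  have habsPhi : Summable fun r : ℕ => ((r:ℝ)+1) * |Phi ν lam t r| := by
    refine (summable_weighted hν hν1 hlam ht).congr fun r => ?_
    have hΓ : 0 < Real.Gamma (ν*(r:ℝ)+2*ν) := Real.Gamma_pos_of_pos (by positivity)
    have habs : |Phi ν lam t r| = lam^2 * lam^r * t^(ν*(r:ℝ)+2*ν-1) / Real.Gamma (ν*(r:ℝ)+2*ν) := by
      rw [Phi]
      simp only [abs_div, abs_mul, abs_pow, abs_neg]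
      rw [abs_of_pos hlam, abs_of_pos hΓ,
        abs_of_pos (Real.rpow_pos_of_pos ht (ν*(r:ℝ)+2*ν-1))]
    rw [habs]
  have step1 : (∫ s in Set.Ioo (0:ℝ) t,
      (lam * s ^ (ν - 1) * ml ν ν (-(lam * s ^ ν))) *
        (lam * (t - s) ^ (ν - 1) * ml ν ν (-(lam * (t - s) ^ ν))))
      = ∫ s in Set.Ioo (0:ℝ) t, ∑' p : ℕ × ℕ, Gfun ν lam t p s := by
    refine setIntegral_congr_fun measurableSet_Ioo (fun s hs => ?_)
    have hs0 : 0 < s := hs.1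
    have hts : 0 < t - s := by linarith [hs.2]
    rw [density_series hs0, density_series hts,
      tsum_mul_tsum_of_summable_norm (coeff_summable hν hν1 hlam hs0)
        (coeff_summable hν hν1 hlam hts)]
    rfl
  have hsum_norm : Summable fun p : ℕ × ℕ => ∫ s in Set.Ioo (0:ℝ) t, ‖Gfun ν lam t p s‖ := by
    refine Summable.congr (summable_diag
      (h := fun r => lam^2 * lam^r * t^(ν*(r:ℝ)+2*ν-1) / Real.Gamma (ν*(r:ℝ)+2*ν))
      (fun r => ?_) (summable_weighted hν hν1 hlam ht)) (fun p => ?_)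
    · have hΓ : 0 < Real.Gamma (ν*(r:ℝ)+2*ν) := Real.Gamma_pos_of_pos (by positivity)
      positivity
    · exact (Gfun_norm_integral hν hlam ht p).symm
  have hswap := MeasureTheory.integral_tsum_of_summable_integral_norm
    (fun p => Gfun_integrable hν ht p) hsum_norm
  rw [intervalIntegral.integral_of_le ht.le, integral_Ioc_eq_integral_Ioo, step1, ← hswap]
  have hterm : ∀ p : ℕ × ℕ, (∫ s in Set.Ioo (0:ℝ) t, Gfun ν lam t p s)
      = Phi ν lam t (p.1 + p.2) := fun p => Gfun_integral hν hlam ht p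
  rw [tsum_congr hterm, tsum_diag' habsPhi]
  -- final: ∑' r, (r+1) * Phi r = RHS
  rw [gml, ← tsum_mul_left]
  refine tsum_congr fun r => ?_
  have hΓ : 0 < Real.Gamma (ν*(r:ℝ)+2*ν) := Real.Gamma_pos_of_pos (by positivity)
  have hfac : (0:ℝ) < (r.factorial : ℝ) := by exact_mod_cast r.factorial_pos
  have e2 : (t^ν)^r = t^(ν*(r:ℝ)) := by
    rw [← Real.rpow_natCast (t^ν) r, ← Real.rpow_mul ht.le]
  have e1 : t^(ν*(r:ℝ)+2*ν-1) = t^(ν*(r:ℝ)) * t^(2*ν-1) := by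
    rw [show ν*(r:ℝ)+2*ν-1 = ν*(r:ℝ)+(2*ν-1) by ring, Real.rpow_add ht]
  rw [Phi, prod_two_add r, Nat.factorial_succ, show -(lam * t^ν) = (-lam) * t^ν by ring,
    mul_pow, e2, e1]
  push_cast
  field_simp
end

section
/- For λ > 0 and every integer k ≥ 0, the functions p̂_k(t) = ((λt)^{2k}/(2k)!) e^{-λt} + ((λt)^{2k+1}/(2k+1)!) e^{-λt}, with the convention p̂_{-1}(t) = 0, satisfy for all t > 0 the second-order recursive differential equation d²p̂_k/dt² + 2λ dp̂_k/dt = -λ²(p̂_k - p̂_{k-1}), together with the initial conditions p̂_0(0) = 1, p̂_k(0) = 0 for k ≥ 1, and p̂_k'(0) = 0 for all k ≥ 0. -/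
open Real

/-- Auxiliary function: `(λt)^n / n! · e^{-λt}`. -/
noncomputable def ppGG (lam : ℝ) (n : ℕ) (t : ℝ) : ℝ :=
  (lam * t) ^ n / n.factorial * Real.exp (-(lam * t))

lemma ppE_deriv (lam t : ℝ) :
    HasDerivAt (fun t => Real.exp (-(lam * t))) (-lam * Real.exp (-(lam * t))) t := by
  have h1 : HasDerivAt (fun t : ℝ => -(lam * t)) (-lam) t := by
    exact (((hasDerivAt_id t).const_mul lam).neg).congr_deriv (by ring)
  refine ((Real.hasDerivAt_exp (-(lam * t))).comp t h1).congr_deriv ?_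
  ring

lemma ppGG_deriv0 (lam t : ℝ) :
    HasDerivAt (ppGG lam 0) (-(lam * ppGG lam 0 t)) t := by
  have h := (hasDerivAt_const t (1 : ℝ)).mul (ppE_deriv lam t)
  have he : ppGG lam 0 = fun t => 1 * Real.exp (-(lam * t)) := by
    funext s; simp [ppGG]
  rw [he]
  refine h.congr_deriv ?_
  simp [ppGG]

lemma ppGG_deriv (lam : ℝ) (n : ℕ) (t : ℝ) :
    HasDerivAt (ppGG lam (n + 1))
      (lam * ppGG lam n t - lam * ppGG lam (n + 1) t) t := by
  have h1 : HasDerivAt (fun t : ℝ => (lam * t) ^ (n + 1))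
      (((n : ℝ) + 1) * (lam * t) ^ n * lam) t := by
    have := ((hasDerivAt_id t).const_mul lam).pow (n + 1)
    exact this.congr_deriv (by simp)
  have h2 := (h1.div_const ((n + 1).factorial : ℝ)).mul (ppE_deriv lam t)
  have he : ppGG lam (n + 1)
      = fun t => (lam * t) ^ (n + 1) / ((n + 1).factorial : ℝ) * Real.exp (-(lam * t)) := by
    funext s; simp [ppGG]
  rw [he]
  refine h2.congr_deriv ?_
  have hfa : ((n + 1).factorial : ℝ) = ((n : ℝ) + 1) * (n.factorial : ℝ) := by
    rw [Nat.factorial_succ]; push_cast; ring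
  have hn0 : (n.factorial : ℝ) ≠ 0 := by positivity
  have hn1 : ((n : ℝ) + 1) ≠ 0 := by positivity
  simp only [ppGG, hfa]
  field_simp
  ring

/-- For `λ > 0`, the functions
`p̂_k(t) = ((λt)^{2k}/(2k)!) e^{-λt} + ((λt)^{2k+1}/(2k+1)!) e^{-λt}`
(with the convention `p̂_{-1} = 0`) satisfy, for all `t > 0`, the second-order
recursive differential equation
`p̂_k'' + 2λ p̂_k' = -λ²(p̂_k - p̂_{k-1})`, together with the initial conditions
`p̂_0(0) = 1`, `p̂_k(0) = 0` for `k ≥ 1`, and `p̂_k'(0) = 0` for all `k ≥ 0`. -/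
theorem second_order_poisson_equation (lam : ℝ) (hlam : 0 < lam)
    (p : ℕ → ℝ → ℝ)
    (hp : ∀ k t, p k t =
      (lam * t) ^ (2 * k) / (2 * k).factorial * Real.exp (-(lam * t))
        + (lam * t) ^ (2 * k + 1) / (2 * k + 1).factorial * Real.exp (-(lam * t))) :
    (∀ k : ℕ, ∀ t : ℝ, 0 < t →
        deriv (deriv (p k)) t + 2 * lam * deriv (p k) t
          = -lam ^ 2 * (p k t - if k = 0 then 0 else p (k - 1) t))
      ∧ p 0 0 = 1
      ∧ (∀ k : ℕ, 1 ≤ k → p k 0 = 0)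
      ∧ (∀ k : ℕ, deriv (p k) 0 = 0) := by
  have hpg : ∀ k, p k = fun t => ppGG lam (2 * k) t + ppGG lam (2 * k + 1) t := by
    intro k; funext t; rw [hp]; rfl
  -- first derivative
  have hD1 : ∀ k (t : ℝ), HasDerivAt (p k)
      (if k = 0 then -(lam * ppGG lam 1 t)
       else lam * ppGG lam (2 * k - 1) t - lam * ppGG lam (2 * k + 1) t) t := by
    intro k t
    rw [hpg k]
    cases k with
    | zero =>
      have h := (ppGG_deriv0 lam t).add (ppGG_deriv lam 0 t)
      rw [if_pos rfl]
      have h2 : (fun t => ppGG lam (2 * 0) t + ppGG lam (2 * 0 + 1) t)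
          = fun x => ppGG lam 0 x + ppGG lam 1 x := by norm_num
      rw [h2]
      refine h.congr_deriv ?_
      ring
    | succ m =>
      have h := (ppGG_deriv lam (2 * m + 1) t).add (ppGG_deriv lam (2 * m + 2) t)
      rw [if_neg (Nat.succ_ne_zero m)]
      have e1 : 2 * (m + 1) - 1 = 2 * m + 1 := by omega
      have e2 : 2 * (m + 1) = 2 * m + 2 := by ring
      have e3 : 2 * (m + 1) + 1 = 2 * m + 3 := by ring
      rw [e1, e2]
      have e4 : 2 * m + 1 + 1 = 2 * m + 2 := by omega
      rw [e4] at h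
      refine h.congr_deriv ?_
      ring
  have hderiv1 : ∀ k, deriv (p k) = fun t =>
      (if k = 0 then -(lam * ppGG lam 1 t)
       else lam * ppGG lam (2 * k - 1) t - lam * ppGG lam (2 * k + 1) t) := by
    intro k; funext t; exact (hD1 k t).deriv
  refine ⟨?_, ?_, ?_, ?_⟩
  · intro k t _
    rw [hderiv1 k]
    cases k with
    | zero =>
      have hd2 : HasDerivAt (fun t => -(lam * ppGG lam 1 t))
          (-(lam * (lam * ppGG lam 0 t - lam * ppGG lam 1 t))) t := by
        have := ((ppGG_deriv lam 0 t).const_mul lam).neg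
        exact this
      have h3 : (fun t : ℝ => if (0 : ℕ) = 0 then -(lam * ppGG lam 1 t)
          else lam * ppGG lam (2 * 0 - 1) t - lam * ppGG lam (2 * 0 + 1) t)
          = fun t => -(lam * ppGG lam 1 t) := by
        funext s; rw [if_pos rfl]
      rw [h3]
      beta_reduce
      rw [hd2.deriv, if_pos rfl, hpg 0]
      beta_reduce
      norm_num
      ring
    | succ m =>
      have e1 : 2 * (m + 1) - 1 = 2 * m + 1 := by omega
      have e3 : 2 * (m + 1) + 1 = 2 * m + 3 := by ring
      have h3 : (fun t : ℝ => if (m + 1 : ℕ) = 0 then -(lam * ppGG lam 1 t)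
          else lam * ppGG lam (2 * (m + 1) - 1) t - lam * ppGG lam (2 * (m + 1) + 1) t)
          = fun t => lam * ppGG lam (2 * m + 1) t - lam * ppGG lam (2 * m + 3) t := by
        funext s; rw [if_neg (Nat.succ_ne_zero m), e1, e3]
      have hd2 : HasDerivAt
          (fun t => lam * ppGG lam (2 * m + 1) t - lam * ppGG lam (2 * m + 3) t)
          (lam * (lam * ppGG lam (2 * m) t - lam * ppGG lam (2 * m + 1) t)
            - lam * (lam * ppGG lam (2 * m + 2) t - lam * ppGG lam (2 * m + 3) t)) t := by
        have ha := (ppGG_deriv lam (2 * m) t).const_mul lam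
        have hb := (ppGG_deriv lam (2 * m + 2) t).const_mul lam
        have := ha.sub hb
        have e4 : 2 * m + 1 = 2 * m + 0 + 1 := by ring
        have e5 : 2 * m + 3 = 2 * m + 2 + 1 := by ring
        rw [e4, e5]
        exact this.congr_deriv (by ring_nf)
      rw [h3]
      beta_reduce
      have e6 : 2 * (m + 1) = 2 * m + 2 := by ring
      have e7 : (m + 1 : ℕ) - 1 = m := by omega
      rw [hd2.deriv, if_neg (Nat.succ_ne_zero m), e7, hpg (m + 1), hpg m]
      beta_reduce
      rw [e6, show 2 * m + 2 + 1 = 2 * m + 3 from by omega]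
      ring
  · rw [hp]; norm_num
  · intro k hk
    rw [hp]
    have h1 : 2 * k ≠ 0 := by omega
    simp [zero_pow, h1]
  · intro k
    rw [hderiv1 k]
    cases k with
    | zero => simp [ppGG]
    | succ m =>
      have h1 : 2 * (m + 1) - 1 ≠ 0 := by omega
      have h2 : 2 * (m + 1) + 1 ≠ 0 := by omega
      simp [ppGG, zero_pow, h1, h2, Nat.succ_ne_zero]
end
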